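/- arXiv:2205.14650 — 5 statements merged into one kernel-verified Lean document; each statement's English description precedes it below -/
import Mathlib

section
/- Let φ be a permutation of a finite set V and Φ the induced permutation on unordered pairs. Suppose u ≠ v lie in the same cycle of φ, of length x. Then the orbit of {u,v} under Φ has length x, unless x is even and v = φ^{x/2}(u), in which case the orbit has length x/2. -/
open Function

private lemma sym2_iter {V : Type*} (φ : V → V) (n : ℕ) (u v : V) :
    (Sym2.map φ)^[n] s(u, v) = s(φ^[n] u, φ^[n] v) := by
  induction n with
  | zero => simp
  | succ n ih => simp [Function.iterate_succ_apply', ih]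

/-- For a permutation `φ` of a finite set `V` and the induced permutation `Sym2.map φ` on
unordered pairs: if `u ≠ v` lie in the same cycle of `φ`, of length `x` (= minimal period),
then the orbit of `s(u,v)` has length `x`, unless `x` is even and `v = φ^[x/2] u`, in which
case the orbit has length `x/2`. -/
theorem orbit_length_of_pair_in_same_cycle
    {V : Type*} [Fintype V] [DecidableEq V] (φ : Equiv.Perm V)
    (u v : V) (huv : u ≠ v) (x : ℕ)
    (hx : x = Function.minimalPeriod φ u)
    (hsame : ∃ k : ℕ, φ^[k] u = v) :
    (¬(Even x ∧ φ^[x / 2] u = v) →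
        Function.minimalPeriod (Sym2.map φ) s(u, v) = x) ∧
    ((Even x ∧ φ^[x / 2] u = v) →
        Function.minimalPeriod (Sym2.map φ) s(u, v) = x / 2) := by
  classical
  obtain ⟨k0, hk0⟩ := hsame
  have hmp : Function.minimalPeriod (fun w => φ • w) u = x := by rw [hx]; rfl
  have hx0 : 0 < x := by
    rw [hx]
    refine Function.IsPeriodicPt.minimalPeriod_pos (orderOf_pos φ) ?_
    show φ^[orderOf φ] u = u
    rw [Equiv.Perm.iterate_eq_pow, pow_orderOf_eq_one]; rfl
  have zkey : ∀ n : ℤ, (φ ^ n) u = u ↔ (x : ℤ) ∣ n := by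
    intro n
    have h := MulAction.zpow_smul_eq_iff_minimalPeriod_dvd (a := φ) (b := u) (n := n)
    rw [hmp] at h
    exact h
  have nkey : ∀ n : ℕ, (φ ^ n) u = u ↔ x ∣ n := by
    intro n
    have h := zkey (n : ℤ)
    rwa [zpow_natCast, Int.natCast_dvd_natCast] at h
  have comp : ∀ a b : ℤ, (φ ^ (a + b)) u = (φ ^ a) ((φ ^ b) u) := by
    intro a b; rw [zpow_add, Equiv.Perm.mul_apply]
  -- normalize k
  set k := k0 % x with hkdef
  have hkx : k < x := Nat.mod_lt _ hx0
  have hkv : (φ ^ (k : ℤ)) u = v := by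
    have h1 : φ ^ (k0 % Function.minimalPeriod (fun w => φ • w) u) • u = φ ^ k0 • u :=
      MulAction.pow_smul_mod_minimalPeriod φ u k0
    rw [hmp] at h1
    rw [Equiv.Perm.iterate_eq_pow] at hk0
    rw [zpow_natCast]
    calc (φ ^ k) u = φ ^ (k0 % x) • u := rfl
      _ = φ ^ k0 • u := h1
      _ = v := hk0
  have hk0' : 0 < k := by
    rcases Nat.eq_zero_or_pos k with h | h
    · exfalso; apply huv; rw [← hkv, h]; simp
    · exact h
  have hiter : ∀ n : ℕ, (Sym2.map φ)^[n] s(u, v) = s((φ ^ (n : ℤ)) u, (φ ^ (n : ℤ)) v) := by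
    intro n
    rw [sym2_iter, Equiv.Perm.iterate_eq_pow, zpow_natCast]
  -- characterization of periods of the pair
  have key : ∀ n : ℕ, (Sym2.map φ)^[n] s(u, v) = s(u, v) ↔
      (x ∣ n ∨ ((x : ℤ) ∣ (n : ℤ) - k ∧ (x : ℤ) ∣ (n : ℤ) + k)) := by
    intro n
    rw [hiter, Sym2.eq_iff]
    constructor
    · rintro (⟨h1, _⟩ | ⟨h1, h2⟩)
      · left
        rw [← nkey n, ← zpow_natCast]; exact h1
      · right
        constructor
        · rw [← zkey]
          have h3 : (φ ^ (-(k : ℤ) + (n : ℤ))) u = (φ ^ (-(k : ℤ))) ((φ ^ (n : ℤ)) u) := comp _ _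
          rw [h1, ← hkv, ← Equiv.Perm.mul_apply, ← zpow_add, neg_add_cancel, zpow_zero] at h3
          rw [show (n : ℤ) - k = -(k : ℤ) + n by ring, h3]; rfl
        · rw [← zkey]
          rw [comp, hkv, h2]
    · rintro (h | ⟨h1, h2⟩)
      · have hu : (φ ^ (n : ℤ)) u = u := by
          rw [zkey]; exact_mod_cast h
        refine Or.inl ⟨hu, ?_⟩
        rw [← hkv, ← comp, add_comm, comp, hu]
      · have hu : (φ ^ (n : ℤ)) u = v := by
          have h1' : (φ ^ ((n : ℤ) - k)) u = u := (zkey _).mpr h1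
          calc (φ ^ (n : ℤ)) u = (φ ^ ((k : ℤ) + ((n : ℤ) - k))) u := by ring_nf
            _ = (φ ^ (k : ℤ)) ((φ ^ ((n : ℤ) - k)) u) := comp _ _
            _ = v := by rw [h1', hkv]
        refine Or.inr ⟨hu, ?_⟩
        rw [← hkv, ← comp]
        exact (zkey _).mpr h2
  -- the minimal period of the pair
  set p := Function.minimalPeriod (Sym2.map φ) s(u, v) with hpdef
  have hperx : Function.IsPeriodicPt (Sym2.map φ) x s(u, v) := (key x).mpr (Or.inl dvd_rfl)
  have hpx : p ∣ x := hperx.minimalPeriod_dvd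
  have hp0 : 0 < p := hperx.minimalPeriod_pos hx0
  have hperp : (Sym2.map φ)^[p] s(u, v) = s(u, v) := Function.iterate_minimalPeriod
  constructor
  · -- generic case
    intro hA
    refine Nat.dvd_antisymm hpx ?_
    rcases (key p).mp hperp with h | ⟨h1, h2⟩
    · exact h
    · exfalso
      have h2k : (x : ℤ) ∣ 2 * k := by
        have hd := dvd_sub h2 h1
        have e : (p : ℤ) + k - ((p : ℤ) - k) = 2 * k := by ring
        rwa [e] at hd
      have h2k' : x ∣ 2 * k := by exact_mod_cast h2k
      obtain ⟨c, hc⟩ := h2k'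
      have hcp : 0 < c := by
        rcases Nat.eq_zero_or_pos c with rfl | h
        · simp at hc; omega
        · exact h
      have hlt : x * c < x * 2 := by
        calc x * c = 2 * k := hc.symm
          _ < 2 * x := by omega
          _ = x * 2 := by ring
      have hc2 : c < 2 := Nat.lt_of_mul_lt_mul_left hlt
      have hc1 : c = 1 := by omega
      subst hc1
      have hxk : x = 2 * k := by omega
      apply hA
      refine ⟨⟨k, by omega⟩, ?_⟩
      have hhk : x / 2 = k := by omega
      rw [hhk, Equiv.Perm.iterate_eq_pow, ← zpow_natCast]
      exact hkv
  · -- exceptional case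
    rintro ⟨hev, hv2⟩
    obtain ⟨y, hy⟩ := hev
    have hy0 : 0 < y := by omega
    have hyx : y < x := by omega
    have hy2 : x / 2 = y := by omega
    rw [hy2] at hv2 ⊢
    have hv2' : (φ ^ (y : ℤ)) u = v := by
      rw [Equiv.Perm.iterate_eq_pow, ← zpow_natCast] at hv2
      exact hv2
    -- k = y
    have hdk : (x : ℤ) ∣ (y : ℤ) - k := by
      rw [← zkey]
      have h3 : (φ ^ (-(k : ℤ) + (y : ℤ))) u = (φ ^ (-(k : ℤ))) ((φ ^ (y : ℤ)) u) := comp _ _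
      rw [hv2', ← hkv, ← Equiv.Perm.mul_apply, ← zpow_add, neg_add_cancel, zpow_zero] at h3
      rw [show (y : ℤ) - k = -(k : ℤ) + y by ring, h3]; rfl
    have hk_half : k = y := by
      have h0 : (y : ℤ) - k = 0 := by
        refine Int.eq_zero_of_abs_lt_dvd hdk ?_
        rw [abs_lt]
        constructor <;> [skip; skip] <;> push_cast <;> omega
      omega
    -- p divides y
    have hper2 : Function.IsPeriodicPt (Sym2.map φ) y s(u, v) := by
      show (Sym2.map φ)^[y] s(u, v) = s(u, v)
      rw [key]
      refine Or.inr ⟨?_, ?_⟩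
      · rw [hk_half]; simp
      · rw [hk_half]
        refine ⟨1, ?_⟩
        push_cast
        omega
    have hpd : p ∣ y := hper2.minimalPeriod_dvd
    -- y divides p
    have hdp : y ∣ p := by
      rcases (key p).mp hperp with h | ⟨h1, h2⟩
      · exact dvd_trans ⟨2, by omega⟩ h
      · rw [hk_half] at h2
        obtain ⟨c, hc⟩ := h2
        have he : (p : ℤ) = (y : ℤ) * (2 * c - 1) := by
          have : (x : ℤ) = 2 * y := by push_cast; omega
          rw [this] at hc
          linarith
        have : (y : ℤ) ∣ (p : ℤ) := ⟨2 * c - 1, he⟩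
        exact_mod_cast this
    exact Nat.dvd_antisymm hpd hdp
end

section
/- Fix n ≥ 1, a positive integer N, a subset A of an n-element set V with |A| = T, and nonnegative integers n₁,…,n_N with Σ_{k=1}^N k·n_k ≤ T. The number of injections σ : A → 𝖵 (where |𝖵| = n) such that some (equivalently, every) bijective extension π of σ satisfies: the permutation π⁻¹ ∘ π* has exactly n_k cycles of length k entirely contained in A for each 1 ≤ k ≤ N, is at most n(n−1)⋯(n−T+1) / (∏_{k=1}^N k^{n_k} n_k!), where π* is a fixed bijection V → 𝖵. -/
open Function

open Function Finset

namespace CPAux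

attribute [local instance 10] Classical.propDecidable

variable {V : Type*} [Fintype V] [DecidableEq V]

/-- The orbit of `v` under `f`, as a finset, assuming minimal period `k`. -/
def orb (f : V → V) (k : ℕ) (v : V) : Finset V := (Finset.range k).image (f^[·] v)

lemma mem_orb_iff {f : V → V} {k : ℕ} {v w : V} :
    w ∈ orb f k v ↔ ∃ i < k, f^[i] v = w := by
  simp [orb]

variable {f : V → V} {k : ℕ} {v w : V}

lemma periodic_of_min (hv : minimalPeriod f v = k) (hk : 0 < k) : v ∈ periodicPts f := by
  rw [← minimalPeriod_pos_iff_mem_periodicPts, hv]; exact hk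

lemma card_orb (hv : minimalPeriod f v = k) : (orb f k v).card = k := by
  rw [orb, Finset.card_image_of_injOn, Finset.card_range]
  have := iterate_injOn_Iio_minimalPeriod (f := f) (x := v)
  rw [hv] at this
  intro a ha b hb hab
  exact this (by simpa using ha) (by simpa using hb) hab

lemma mem_orb_self (hk : 0 < k) : v ∈ orb f k v :=
  mem_orb_iff.2 ⟨0, hk, rfl⟩

lemma iterate_mem_orb (hv : minimalPeriod f v = k) (hk : 0 < k) (i : ℕ) :
    f^[i] v ∈ orb f k v := by
  refine mem_orb_iff.2 ⟨i % k, Nat.mod_lt _ hk, ?_⟩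
  rw [← hv]; exact iterate_mod_minimalPeriod_eq

lemma min_of_mem_orb (hv : minimalPeriod f v = k) (hk : 0 < k) (hw : w ∈ orb f k v) :
    minimalPeriod f w = k := by
  obtain ⟨i, _, rfl⟩ := mem_orb_iff.1 hw
  rw [minimalPeriod_apply_iterate (periodic_of_min hv hk), hv]

lemma orb_eq_of_mem (hv : minimalPeriod f v = k) (hk : 0 < k) (hw : w ∈ orb f k v) :
    orb f k w = orb f k v := by
  have hwmin : minimalPeriod f w = k := min_of_mem_orb hv hk hw
  apply Finset.eq_of_subset_of_card_le
  · intro u hu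
    obtain ⟨j, _, rfl⟩ := mem_orb_iff.1 hu
    obtain ⟨i, _, rfl⟩ := mem_orb_iff.1 hw
    rw [← Function.iterate_add_apply]
    exact iterate_mem_orb hv hk _
  · rw [card_orb hv, card_orb hwmin]

lemma mem_orb_symm (hv : minimalPeriod f v = k) (hw : minimalPeriod f w = k) (hk : 0 < k)
    (h : w ∉ orb f k v) : v ∉ orb f k w := by
  intro hv'
  exact h (orb_eq_of_mem hw hk hv' ▸ mem_orb_self hk)

/-- Counting tuples of elements of `C` with pairwise disjoint orbits. -/
lemma tup_card (f : V → V) (k c : ℕ) (hk : 0 < k) (C : Finset V)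
    (hmin : ∀ v ∈ C, minimalPeriod f v = k)
    (horb : ∀ v ∈ C, ∀ i, f^[i] v ∈ C)
    (hcard : C.card = k * c) :
    ∀ t, t ≤ c → k ^ t * c.descFactorial t ≤
      Nat.card {h : Fin t → V // (∀ j, h j ∈ C) ∧
        ∀ j j' : Fin t, j ≠ j' → h j' ∉ orb f k (h j)} := by
  intro t
  induction t with
  | zero =>
    intro _
    have : Nat.card {h : Fin 0 → V // (∀ j, h j ∈ C) ∧
        ∀ j j' : Fin 0, j ≠ j' → h j' ∉ orb f k (h j)} = 1 := by
      rw [Nat.card_eq_one_iff_unique]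
      constructor
      · constructor
        rintro ⟨h1, -⟩ ⟨h2, -⟩
        ext j; exact absurd j.2 (by omega)
      · exact ⟨⟨fun j => absurd j.2 (by omega), fun j => absurd j.2 (by omega),
          fun j => absurd j.2 (by omega)⟩⟩
    rw [this]; simp
  | succ t ih =>
    intro ht
    have ht' : t ≤ c := by omega
    have key := ih ht'
    set P : (Fin t → V) → Prop := fun h => (∀ j, h j ∈ C) ∧
        ∀ j j' : Fin t, j ≠ j' → h j' ∉ orb f k (h j) with hP
    -- map from sigma
    set U : {h : Fin t → V // P h} → Finset V :=
      fun h => C \ (Finset.univ.biUnion fun j => orb f k (h.1 j)) with hU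
    have hUcard : ∀ h, k * (c - t) ≤ (U h).card := by
      intro h
      have h1 : (Finset.univ.biUnion fun j => orb f k (h.1 j)).card ≤ k * t := by
        refine le_trans (Finset.card_biUnion_le) (le_of_eq ?_)
        rw [Finset.sum_congr rfl (fun j _ => card_orb (hmin _ (h.2.1 j))),
          Finset.sum_const, Finset.card_univ, Fintype.card_fin, smul_eq_mul, mul_comm]
      show k * (c - t) ≤ (C \ (Finset.univ.biUnion fun j => orb f k (h.1 j))).card
      calc k * (c - t) = k * c - k * t := Nat.mul_sub ..
        _ = C.card - k * t := by rw [hcard]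
        _ ≤ C.card - (Finset.univ.biUnion fun j => orb f k (h.1 j)).card :=
            Nat.sub_le_sub_left h1 _
        _ ≤ _ := Finset.le_card_sdiff _ _
    -- injection from the sigma type into the (t+1)-tuples
    set Q : (Fin (t+1) → V) → Prop := fun h => (∀ j, h j ∈ C) ∧
        ∀ j j' : Fin (t+1), j ≠ j' → h j' ∉ orb f k (h j) with hQ
    have Θinj : ∃ Θ : (Σ h : {h : Fin t → V // P h}, ↥(U h)) → {h : Fin (t+1) → V // Q h},
        Function.Injective Θ := by
      refine ⟨fun x => ⟨Fin.snoc x.1.1 x.2.1, ?_, ?_⟩, ?_⟩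
      · intro j
        refine Fin.lastCases ?_ ?_ j
        · simpa using (Finset.mem_sdiff.1 x.2.2).1
        · intro j0; simpa using x.1.2.1 j0
      · have hvC : x.2.1 ∈ C := (Finset.mem_sdiff.1 x.2.2).1
        have hvnot : ∀ j0 : Fin t, x.2.1 ∉ orb f k (x.1.1 j0) := by
          intro j0 hmem
          have := (Finset.mem_sdiff.1 x.2.2).2
          exact this (Finset.mem_biUnion.2 ⟨j0, Finset.mem_univ _, hmem⟩)
        intro j j' hne
        revert hne
        refine Fin.lastCases ?_ (fun j0 => ?_) j <;> refine Fin.lastCases ?_ (fun j0' => ?_) j'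
        · intro hne; exact absurd rfl hne
        · intro _
          rw [Fin.snoc_castSucc, Fin.snoc_last]
          exact mem_orb_symm (hmin _ (x.1.2.1 j0')) (hmin _ hvC) hk (hvnot j0')
        · intro _
          rw [Fin.snoc_castSucc, Fin.snoc_last]
          exact hvnot j0
        · intro hne
          rw [Fin.snoc_castSucc, Fin.snoc_castSucc]
          exact x.1.2.2 j0 j0' (fun e => hne (by rw [e]))
      · rintro ⟨⟨h1, hh1⟩, v1, hv1⟩ ⟨⟨h2, hh2⟩, v2, hv2⟩ heq
        have heq' : Fin.snoc h1 v1 = (Fin.snoc h2 v2 : Fin (t+1) → V) := congrArg (fun z => z.1) heq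
        have hh : h1 = h2 := by
          funext j
          have := congrFun heq' (Fin.castSucc j)
          simpa using this
        have hv : v1 = v2 := by
          have := congrFun heq' (Fin.last t)
          simpa using this
        subst hh; subst hv; rfl
    obtain ⟨Θ, hΘ⟩ := Θinj
    have hcards : k ^ (t+1) * c.descFactorial (t+1) ≤
        Nat.card (Σ h : {h : Fin t → V // P h}, ↥(U h)) := by
      have : Nat.card (Σ h : {h : Fin t → V // P h}, ↥(U h)) =
          ∑ h : {h : Fin t → V // P h}, (U h).card := by
        rw [Nat.card_eq_fintype_card, Fintype.card_sigma]
        congr 1; funext h; rw [Fintype.card_coe]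
      rw [this]
      calc k ^ (t+1) * c.descFactorial (t+1)
          = (k ^ t * c.descFactorial t) * (k * (c - t)) := by
            rw [Nat.descFactorial_succ]; ring
        _ ≤ Nat.card {h : Fin t → V // P h} * (k * (c - t)) := by
            exact Nat.mul_le_mul_right _ key
        _ = ∑ _h : {h : Fin t → V // P h}, (k * (c-t)) := by
            rw [Finset.sum_const, Finset.card_univ, Nat.card_eq_fintype_card, smul_eq_mul,
              mul_comm]
        _ ≤ ∑ h : {h : Fin t → V // P h}, (U h).card :=
            Finset.sum_le_sum (fun h _ => hUcard h)
    calc k ^ (t+1) * c.descFactorial (t+1)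
        ≤ Nat.card (Σ h : {h : Fin t → V // P h}, ↥(U h)) := hcards
      _ ≤ Nat.card {h : Fin (t+1) → V // Q h} := Nat.card_le_card_of_injective Θ hΘ



open Function Finset
attribute [local instance 10] Classical.propDecidable

section Defs
variable (N : ℕ) (nk : ℕ → ℕ)

/-- Index type for cycle positions: a length `k ∈ [1,N]`, a cycle index `j < nk k`,
and a position `i < k` within the cycle. -/
abbrev Idx := Σ k : ↥(Finset.Icc 1 N), Fin (nk k.1) × Fin (k.1 : ℕ)

lemma kpos (k : ↥(Finset.Icc 1 N)) : 0 < (k.1 : ℕ) := (Finset.mem_Icc.mp k.2).1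

/-- zero position -/
def z (k : ↥(Finset.Icc 1 N)) : Fin (k.1 : ℕ) := ⟨0, kpos N k⟩

/-- cyclic predecessor within `Fin k` -/
def predi (k : ↥(Finset.Icc 1 N)) (i : Fin (k.1:ℕ)) : Fin (k.1:ℕ) :=
  if _ : i.1 = 0 then ⟨k.1 - 1, by have := kpos N k; omega⟩
  else ⟨i.1 - 1, by have := i.2; omega⟩

/-- cyclic successor within `Fin k` -/
def succi (k : ↥(Finset.Icc 1 N)) (i : Fin (k.1:ℕ)) : Fin (k.1:ℕ) :=
  if _ : i.1 = k.1 - 1 then z N k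
  else ⟨i.1 + 1, by have := i.2; have := kpos N k; omega⟩

lemma predi_succi (k : ↥(Finset.Icc 1 N)) (i : Fin (k.1:ℕ)) :
    predi N k (succi N k i) = i := by
  have hk := kpos N k
  have hi := i.2
  apply Fin.ext
  simp only [predi, succi]
  split_ifs with h1 h2 h3
  · show (k.1 : ℕ) - 1 = i.1
    omega
  · exact absurd rfl h2
  · exact h3.elim
  · show i.1 + 1 - 1 = i.1
    omega

/-- predecessor position (cyclically within the cycle) -/
def pred : Idx N nk → Idx N nk := fun p => ⟨p.1, p.2.1, predi N p.1 p.2.2⟩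

/-- successor position -/
def succ : Idx N nk → Idx N nk := fun p => ⟨p.1, p.2.1, succi N p.1 p.2.2⟩

lemma pred_succ (p : Idx N nk) : pred N nk (succ N nk p) = p := by
  obtain ⟨k, j, i⟩ := p
  show (⟨k, (j, predi N k (succi N k i))⟩ : Idx N nk) = ⟨k, (j, i)⟩
  rw [predi_succi]

end Defs

section CSet
variable {V : Type*} [Fintype V] [DecidableEq V] (f : V → V) (A : Finset V)

/-- The set of points of `A` of minimal period `k` whose full orbit lies in `A`. -/
noncomputable def Cset (k : ℕ) : Finset V :=
  Finset.univ.filter (fun v => v ∈ A ∧ minimalPeriod f v = k ∧ ∀ i, f^[i] v ∈ A)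

variable {f A}

lemma mem_Cset {k : ℕ} {v : V} :
    v ∈ Cset f A k ↔ v ∈ A ∧ minimalPeriod f v = k ∧ ∀ i, f^[i] v ∈ A := by
  simp [Cset]

lemma cset_iterate_mem {k : ℕ} (hk : 0 < k) {v : V} (hv : v ∈ Cset f A k) (i : ℕ) :
    f^[i] v ∈ Cset f A k := by
  obtain ⟨hA, hmin, hall⟩ := mem_Cset.1 hv
  refine mem_Cset.2 ⟨hall i, ?_, fun i' => ?_⟩
  · rw [minimalPeriod_apply_iterate (periodic_of_min hmin hk), hmin]
  · rw [← Function.iterate_add_apply]; exact hall _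
end CSet

section Cond
variable {V : Type*} [Fintype V] [DecidableEq V] (N : ℕ) (nk : ℕ → ℕ) (f : V → V) (A : Finset V)

/-- A "marking": a listing of `nk k` pairwise disjoint `k`-cycles inside `A`, for each
`k ∈ [1,N]`, with a chosen starting point in each cycle. -/
@[reducible] def Cond (g : Idx N nk → V) : Prop :=
  (∀ p : Idx N nk, g p ∈ Cset f A p.1.1) ∧
  (∀ (k : ↥(Finset.Icc 1 N)) (j : Fin (nk k.1)) (i : Fin (k.1:ℕ)),
      g ⟨k, j, i⟩ = f^[i.1] (g ⟨k, j, z N k⟩)) ∧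
  (∀ (k : ↥(Finset.Icc 1 N)) (j j' : Fin (nk k.1)), j ≠ j' →
      g ⟨k, j', z N k⟩ ∉ orb f k.1 (g ⟨k, j, z N k⟩))

variable {N nk f A}

lemma Cond.minP {g : Idx N nk → V} (hg : Cond N nk f A g) (p : Idx N nk) :
    minimalPeriod f (g p) = p.1.1 := (mem_Cset.1 (hg.1 p)).2.1

lemma Cond.memA {g : Idx N nk → V} (hg : Cond N nk f A g) (p : Idx N nk) : g p ∈ A :=
  (mem_Cset.1 (hg.1 p)).1

lemma Cond.f_pred {g : Idx N nk → V} (hg : Cond N nk f A g) (p : Idx N nk) :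
    f (g (pred N nk p)) = g p := by
  obtain ⟨k, j, i⟩ := p
  have hk := kpos N k
  have hi := i.2
  have hmin : minimalPeriod f (g ⟨k, j, z N k⟩) = k.1 := hg.minP ⟨k, j, z N k⟩
  show f (g ⟨k, (j, predi N k i)⟩) = g ⟨k, (j, i)⟩
  rw [hg.2.1 k j i, hg.2.1 k j (predi N k i)]
  simp only [predi]
  split_ifs with h
  · rw [← Function.iterate_succ_apply' f (k.1 - 1) (g ⟨k, (j, z N k)⟩)]
    have h1 : k.1 - 1 + 1 = k.1 := by omega
    rw [Nat.succ_eq_add_one, h1, h, Function.iterate_zero_apply]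
    exact (congrArg (fun t => f^[t] (g ⟨k, (j, z N k)⟩)) hmin).symm.trans
      iterate_minimalPeriod
  · rw [← Function.iterate_succ_apply' f (i.1 - 1) (g ⟨k, (j, z N k)⟩)]
    congr 1
    omega

lemma Cond.f_succ {g : Idx N nk → V} (hg : Cond N nk f A g) (p : Idx N nk) :
    f (g p) = g (succ N nk p) := by
  conv_lhs => rw [← pred_succ N nk p]
  exact hg.f_pred (succ N nk p)

lemma Cond.injective {g : Idx N nk → V} (hf : Function.Injective f)
    (hg : Cond N nk f A g) : Function.Injective g := by
  rintro ⟨k, j, i⟩ ⟨k', j', i'⟩ h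
  have hk := kpos N k
  have hkk : k = k' := by
    have h1 := hg.minP ⟨k, j, i⟩
    have h2 := hg.minP ⟨k', j', i'⟩
    exact Subtype.ext (by rw [← h1, ← h2, h])
  subst hkk
  have hmin0 : minimalPeriod f (g ⟨k, j, z N k⟩) = k.1 := hg.minP _
  have hmin0' : minimalPeriod f (g ⟨k, j', z N k⟩) = k.1 := hg.minP _
  have hjj : j = j' := by
    by_contra hne
    have m1 : g ⟨k, j, i⟩ ∈ orb f k.1 (g ⟨k, j, z N k⟩) :=
      mem_orb_iff.2 ⟨i.1, i.2, (hg.2.1 k j i).symm⟩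
    have m2 : g ⟨k, j', i'⟩ ∈ orb f k.1 (g ⟨k, j', z N k⟩) :=
      mem_orb_iff.2 ⟨i'.1, i'.2, (hg.2.1 k j' i').symm⟩
    rw [← h] at m2
    have e1 := orb_eq_of_mem hmin0 hk m1
    have e2 := orb_eq_of_mem hmin0' hk m2
    have : g ⟨k, j', z N k⟩ ∈ orb f k.1 (g ⟨k, j, z N k⟩) := by
      rw [← e1, e2]
      exact mem_orb_self hk
    exact hg.2.2 k j j' hne this
  subst hjj
  have hii : i = i' := by
    have e1 := hg.2.1 k j i
    have e2 := hg.2.1 k j i'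
    rw [e1, e2] at h
    have := iterate_injOn_Iio_minimalPeriod (f := f) (x := g ⟨k, j, z N k⟩)
    rw [hmin0] at this
    exact Fin.ext (this (Set.mem_Iio.2 i.2) (Set.mem_Iio.2 i'.2) h)
  subst hii
  rfl
end Cond

section MarkCard
variable {V : Type*} [Fintype V] [DecidableEq V] {N : ℕ} {nk : ℕ → ℕ} {f : V → V}
  {A : Finset V}

lemma marking_card (hf : Function.Injective f)
    (hcard : ∀ k ∈ Finset.Icc 1 N, (Cset f A k).card = k * nk k) :
    ∏ k ∈ Finset.Icc 1 N, (k ^ nk k * (nk k).factorial) ≤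
      Nat.card {g : Idx N nk → V // Cond N nk f A g} := by
  classical
  set T : ↥(Finset.Icc 1 N) → Type _ := fun k =>
    {h : Fin (nk k.1) → V // (∀ j, h j ∈ Cset f A k.1) ∧
      ∀ j j' : Fin (nk k.1), j ≠ j' → h j' ∉ orb f k.1 (h j)} with hT
  have step1 : ∀ k : ↥(Finset.Icc 1 N),
      (k.1:ℕ) ^ nk k.1 * (nk k.1).factorial ≤ Nat.card (T k) := by
    intro k
    have hk := kpos N k
    have := tup_card f k.1 (nk k.1) hk (Cset f A k.1)
      (fun v hv => (mem_Cset.1 hv).2.1)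
      (fun v hv i => cset_iterate_mem hk hv i)
      (hcard k.1 k.2) (nk k.1) le_rfl
    rwa [Nat.descFactorial_self] at this
  have step2 : ∃ Φ : (∀ k, T k) → {g : Idx N nk → V // Cond N nk f A g},
      Function.Injective Φ := by
    refine ⟨fun h => ⟨fun p => f^[p.2.2.1] ((h p.1).1 p.2.1), ?_, ?_, ?_⟩, ?_⟩
    · exact fun p => cset_iterate_mem (kpos N p.1) ((h p.1).2.1 p.2.1) _
    · intro k j i
      rfl
    · intro k j j' hne
      exact (h k).2.2 j j' hne
    · intro h1 h2 e
      funext k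
      apply Subtype.ext
      funext j
      exact congrArg (fun gg => gg.1 ⟨k, (j, z N k)⟩) e
  obtain ⟨Φ, hΦ⟩ := step2
  calc ∏ k ∈ Finset.Icc 1 N, (k ^ nk k * (nk k).factorial)
      = ∏ k : ↥(Finset.Icc 1 N), ((k.1:ℕ) ^ nk k.1 * (nk k.1).factorial) :=
        (Finset.prod_coe_sort _ _).symm
    _ ≤ ∏ k : ↥(Finset.Icc 1 N), Nat.card (T k) :=
        Finset.prod_le_prod' (fun k _ => step1 k)
    _ = Nat.card (∀ k, T k) := (Nat.card_pi).symm
    _ ≤ _ := Nat.card_le_card_of_injective Φ hΦ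

end MarkCard

section Ext
variable {V W : Type*} [Fintype V] [Fintype W] [DecidableEq V] [DecidableEq W]

lemma exists_ext (hVW : Fintype.card V = Fintype.card W) (π0 : V → W) (A : Finset V)
    (σ : ↥A → W) (hσ : Function.Injective σ) :
    ∃ π : V ≃ W, ∀ a : ↥A, π a.1 = σ a := by
  classical
  set F : V → W := fun v => if h : v ∈ A then σ ⟨v, h⟩ else π0 v with hF
  have h2 : Set.InjOn F A := by
    intro a ha b hb e
    have ha' : a ∈ A := ha
    have hb' : b ∈ A := hb
    simp only [hF, dif_pos ha', dif_pos hb'] at e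
    exact congrArg Subtype.val (hσ e)
  obtain ⟨g, hg⟩ := Finset.exists_equiv_extend_of_card_eq
    (t := (Finset.univ : Finset W)) (by simpa using hVW) (s := A) (f := F)
    (Finset.subset_univ _) h2
  refine ⟨g.trans (Equiv.subtypeUnivEquiv (fun w => Finset.mem_univ w)), fun a => ?_⟩
  have := hg a.1 a.2
  simp only [Equiv.trans_apply, Equiv.subtypeUnivEquiv_apply]
  rw [this, hF]
  simp only [dif_pos a.2]

end Ext

section Decode
variable {V W : Type*} [Fintype V] [DecidableEq V]

lemma decode_eq {N : ℕ} {nk : ℕ → ℕ} {f : V → V} {A : Finset V} {g : Idx N nk → V}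
    (hg : Cond N nk f A g) (σ : ↥A → W) (τ0 : V → W)
    (hkey : ∀ (v : V) (hv : f v ∈ A), σ ⟨f v, hv⟩ = τ0 v) (p : Idx N nk)
    (h : g p ∈ A) :
    σ ⟨g p, h⟩ = τ0 (g (pred N nk p)) := by
  have h1 : f (g (pred N nk p)) = g p := hg.f_pred p
  have h2 : f (g (pred N nk p)) ∈ A := by rw [h1]; exact h
  have h3 := hkey (g (pred N nk p)) h2
  rw [← h3]
  congr 1
  exact Subtype.ext h1.symm

end Decode

section MainNat
variable {V W : Type*} [Fintype V] [Fintype W] [DecidableEq V] [DecidableEq W]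

lemma main_nat (n T N : ℕ) (hV : Fintype.card V = n) (hW : Fintype.card W = n)
    (πs : V ≃ W) (A : Finset V) (hA : A.card = T)
    (nk : ℕ → ℕ) (hsum : ∑ k ∈ Finset.Icc 1 N, k * nk k ≤ T) :
    Nat.card {σ : A → W // Function.Injective σ ∧
        ∀ π : V ≃ W, (∀ a : A, π (a : V) = σ a) →
          ∀ k ∈ Finset.Icc 1 N,
            Set.ncard {v : V | v ∈ A ∧
              Function.minimalPeriod (π.symm ∘ πs) v = k ∧
              ∀ i : ℕ, (π.symm ∘ πs)^[i] v ∈ A} = k * nk k} *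
      ∏ k ∈ Finset.Icc 1 N, (k ^ nk k * (nk k).factorial) ≤ n.descFactorial T := by
  classical
  set S := {σ : A → W // Function.Injective σ ∧
        ∀ π : V ≃ W, (∀ a : A, π (a : V) = σ a) →
          ∀ k ∈ Finset.Icc 1 N,
            Set.ncard {v : V | v ∈ A ∧
              Function.minimalPeriod (π.symm ∘ πs) v = k ∧
              ∀ i : ℕ, (π.symm ∘ πs)^[i] v ∈ A} = k * nk k} with hS
  set m := ∑ k ∈ Finset.Icc 1 N, k * nk k with hm
  have hTn : T ≤ n := by
    have h1 := Finset.card_le_univ A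
    omega
  -- choose extensions
  choose E hE using fun σ : S => exists_ext (by rw [hV, hW]) (fun v => πs v) A σ.1 σ.2.1
  set F : S → V → V := fun σ => ⇑(E σ).symm ∘ ⇑πs with hF
  have hFinj : ∀ σ, Function.Injective (F σ) :=
    fun σ => ((E σ).symm.injective).comp πs.injective
  have hCsetcard : ∀ σ : S, ∀ k ∈ Finset.Icc 1 N, (Cset (F σ) A k).card = k * nk k := by
    intro σ k hk
    have h0 := σ.2.2 (E σ) (fun a => hE σ a) k hk
    have hsetEq : {v : V | v ∈ A ∧
        Function.minimalPeriod (⇑(E σ).symm ∘ ⇑πs) v = k ∧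
        ∀ i : ℕ, (⇑(E σ).symm ∘ ⇑πs)^[i] v ∈ A} = ↑(Cset (F σ) A k) := by
      ext v
      rw [Finset.mem_coe, mem_Cset]
      exact Iff.rfl
    rw [hsetEq, Set.ncard_coe_finset] at h0
    exact h0
  -- key extension fact
  have keyσ : ∀ (σ : S) (v : V) (hv : F σ v ∈ A), σ.1 ⟨F σ v, hv⟩ = πs v := by
    intro σ v hv
    have h1 := hE σ ⟨F σ v, hv⟩
    rw [← h1]
    show (E σ) ((E σ).symm (πs v)) = πs v
    exact (E σ).apply_symm_apply _
  -- markings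
  set M : S → Type _ := fun σ => {g : Idx N nk → V // Cond N nk (F σ) A g} with hM
  have hMcard : ∀ σ, ∏ k ∈ Finset.Icc 1 N, (k ^ nk k * (nk k).factorial) ≤ Nat.card (M σ) :=
    fun σ => marking_card (hFinj σ) (hCsetcard σ)
  -- codomain
  set B := {g : Idx N nk ↪ V // ∀ p, g p ∈ A} with hB
  set P := Σ g : B, (↥(A \ Finset.image (⇑g.1) Finset.univ) ↪
    ↥((Finset.image (fun p => πs (g.1 p)) Finset.univ)ᶜ)) with hP
  -- encoding
  have enc : ∃ Enc : (Σ σ : S, M σ) → P, Function.Injective Enc := by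
    refine ⟨fun x => ⟨⟨⟨x.2.1, x.2.2.injective (hFinj x.1)⟩, fun p => x.2.2.memA p⟩,
      ⟨fun v => ⟨x.1.1 ⟨v.1, (Finset.mem_sdiff.1 v.2).1⟩, ?_⟩, ?_⟩⟩, ?_⟩
    · -- value avoids the image of πs ∘ g
      rw [Finset.mem_compl]
      intro hmem
      obtain ⟨p, -, hp⟩ := Finset.mem_image.1 hmem
      have hfA : F x.1 (x.2.1 p) ∈ A := by
        rw [x.2.2.f_succ p]; exact x.2.2.memA _
      have h1 : x.1.1 ⟨F x.1 (x.2.1 p), hfA⟩ = πs (x.2.1 p) := keyσ x.1 (x.2.1 p) hfA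
      have h2 : x.1.1 ⟨F x.1 (x.2.1 p), hfA⟩ = x.1.1 ⟨v.1, (Finset.mem_sdiff.1 v.2).1⟩ := by
        rw [h1]; exact hp
      have h3 : F x.1 (x.2.1 p) = v.1 := congrArg Subtype.val (x.1.2.1 h2)
      have h4 : v.1 ∈ Finset.image (⇑(⟨x.2.1, x.2.2.injective (hFinj x.1)⟩ : Idx N nk ↪ V))
          Finset.univ := by
        refine Finset.mem_image.2 ⟨succ N nk p, Finset.mem_univ _, ?_⟩
        show x.2.1 (succ N nk p) = v.1
        rw [← h3, x.2.2.f_succ p]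
      exact (Finset.mem_sdiff.1 v.2).2 h4
    · -- injectivity of the fiber map
      intro v w hvw
      have h5 := x.1.2.1 (Subtype.ext_iff.1 hvw)
      have h6 := Subtype.ext_iff.1 h5
      exact Subtype.ext h6
    · -- injectivity of Enc
      rintro ⟨⟨σ, hσ⟩, g, hg⟩ ⟨⟨σ', hσ'⟩, g', hg'⟩ h
      have h1 := congrArg Sigma.fst h
      have hgg : g = g' := by
        funext p
        exact congrArg (fun b : B => (b.1 : Idx N nk → V) p) h1
      subst hgg
      have hτ := eq_of_heq (Sigma.ext_iff.1 h).2
      have hσσ : σ = σ' := by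
        funext a
        by_cases hmem : (a : V) ∈ Finset.image g Finset.univ
        · obtain ⟨p, -, hp⟩ := Finset.mem_image.1 hmem
          have hpa : g p ∈ A := hg.memA p
          have d1 : σ ⟨g p, hpa⟩ = πs (g (pred N nk p)) :=
            decode_eq hg σ (⇑πs) (fun v hv => keyσ (⟨σ, hσ⟩ : S) v hv) p hpa
          have d2 : σ' ⟨g p, hpa⟩ = πs (g (pred N nk p)) :=
            decode_eq hg' σ' (⇑πs) (fun v hv => keyσ (⟨σ', hσ'⟩ : S) v hv) p hpa
          have ha : a = ⟨g p, hpa⟩ := Subtype.ext hp.symm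
          rw [ha, d1, d2]
        · have hins : (a : V) ∈ A \ Finset.image g Finset.univ :=
            Finset.mem_sdiff.2 ⟨a.2, hmem⟩
          have := congrArg (fun τ => (τ ⟨(a : V), hins⟩ : W)) hτ
          exact this
      subst hσσ
      rfl
  obtain ⟨Enc, hEnc⟩ := enc
  -- cardinal bookkeeping
  have hmcard : Fintype.card (Idx N nk) = m := by
    have h1 : ∀ k : ↥(Finset.Icc 1 N),
        Fintype.card (Fin (nk k.1) × Fin (k.1 : ℕ)) = k.1 * nk k.1 := by
      intro k
      rw [Fintype.card_prod, Fintype.card_fin, Fintype.card_fin, mul_comm]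
    calc Fintype.card (Idx N nk)
        = ∑ k : ↥(Finset.Icc 1 N), Fintype.card (Fin (nk k.1) × Fin (k.1 : ℕ)) :=
          Fintype.card_sigma
      _ = ∑ k : ↥(Finset.Icc 1 N), k.1 * nk k.1 := Finset.sum_congr rfl (fun k _ => h1 k)
      _ = ∑ k ∈ Finset.Icc 1 N, k * nk k :=
          (Finset.sum_subtype (p := fun x => x ∈ Finset.Icc 1 N) (Finset.Icc 1 N)
            (fun x => Iff.rfl) (fun k => k * nk k)).symm
  have hmT : m ≤ T := hsum
  have c1 : Nat.card S * ∏ k ∈ Finset.Icc 1 N, (k ^ nk k * (nk k).factorial) ≤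
      Nat.card (Σ σ : S, M σ) := by
    have hsig : Nat.card (Σ σ : S, M σ) = ∑ σ : S, Nat.card (M σ) := by
      rw [Nat.card_eq_fintype_card, Fintype.card_sigma]
      exact Finset.sum_congr rfl (fun σ _ => (Nat.card_eq_fintype_card).symm)
    rw [hsig]
    calc Nat.card S * ∏ k ∈ Finset.Icc 1 N, (k ^ nk k * (nk k).factorial)
        = ∑ _σ : S, ∏ k ∈ Finset.Icc 1 N, (k ^ nk k * (nk k).factorial) := by
          rw [Finset.sum_const, Finset.card_univ, smul_eq_mul, Nat.card_eq_fintype_card]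
      _ ≤ ∑ σ : S, Nat.card (M σ) := Finset.sum_le_sum (fun σ _ => hMcard σ)
  have c2 : Nat.card (Σ σ : S, M σ) ≤ Nat.card P :=
    Nat.card_le_card_of_injective Enc hEnc
  have cB : Fintype.card B = T.descFactorial m := by
    have e1 : B ≃ (Idx N nk ↪ ↥A) :=
      { toFun := fun g => ⟨fun p => ⟨g.1 p, g.2 p⟩,
          fun p q hpq => g.1.injective (congrArg Subtype.val hpq)⟩
        invFun := fun h => ⟨⟨fun p => (h p).1,
          fun p q hpq => h.injective (Subtype.ext hpq)⟩, fun p => (h p).2⟩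
        left_inv := fun g => rfl
        right_inv := fun h => rfl }
    rw [Fintype.card_congr e1, Fintype.card_embedding_eq, Fintype.card_coe, hA, hmcard]
  have c3 : Nat.card P = T.descFactorial m * (n - m).descFactorial (T - m) := by
    rw [Nat.card_eq_fintype_card, Fintype.card_sigma]
    have hfib : ∀ g : B, Fintype.card (↥(A \ Finset.image (⇑g.1) Finset.univ) ↪
        ↥((Finset.image (fun p => πs (g.1 p)) Finset.univ)ᶜ)) =
        (n - m).descFactorial (T - m) := by
      intro g
      have him : (Finset.image (⇑g.1) Finset.univ).card = m := by
        rw [Finset.card_image_of_injective _ g.1.injective, Finset.card_univ, hmcard]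
      have hsub : Finset.image (⇑g.1) Finset.univ ⊆ A := by
        intro v hv
        obtain ⟨p, -, rfl⟩ := Finset.mem_image.1 hv
        exact g.2 p
      have hdom : (A \ Finset.image (⇑g.1) Finset.univ).card = T - m := by
        rw [Finset.card_sdiff_of_subset hsub, hA, him]
      have hcod : ((Finset.image (fun p => πs (g.1 p)) Finset.univ)ᶜ).card = n - m := by
        have hc : (fun p => πs (g.1 p)) = (⇑πs ∘ ⇑g.1) := rfl
        rw [Finset.card_compl, hc, Finset.card_image_of_injective _
          (πs.injective.comp g.1.injective), Finset.card_univ, hmcard, hW]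
      rw [Fintype.card_embedding_eq, Fintype.card_coe, Fintype.card_coe, hdom, hcod]
    rw [Finset.sum_congr rfl (fun g _ => hfib g), Finset.sum_const, Finset.card_univ, cB,
      smul_eq_mul]
  have c4 : T.descFactorial m * (n - m).descFactorial (T - m) ≤ n.descFactorial T := by
    calc T.descFactorial m * (n - m).descFactorial (T - m)
        ≤ n.descFactorial m * (n - m).descFactorial (T - m) :=
          Nat.mul_le_mul_right _ (Nat.descFactorial_le _ hTn)
      _ = n.descFactorial T := by
          rw [mul_comm]
          exact Nat.descFactorial_mul_descFactorial hmT
  calc Nat.card S * ∏ k ∈ Finset.Icc 1 N, (k ^ nk k * (nk k).factorial)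
      ≤ Nat.card (Σ σ : S, M σ) := c1
    _ ≤ Nat.card P := c2
    _ = T.descFactorial m * (n - m).descFactorial (T - m) := c3
    _ ≤ n.descFactorial T := c4

end MainNat
end CPAux


/-- The number of injections `σ : A → 𝖵` such that every bijective extension `π` of `σ`
satisfies: the permutation `φ = π⁻¹ ∘ π*` has exactly `n_k` cycles of length `k` entirely
contained in `A`, for each `1 ≤ k ≤ N` (equivalently, the set of vertices of `A` lying on
such cycles has cardinality `k·n_k`), is at most
`n(n−1)⋯(n−T+1) / ∏_{k=1}^N k^{n_k} n_k!`. -/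
theorem count_embeddings_with_cycle_profile
    {V W : Type*} [Fintype V] [Fintype W] [DecidableEq V] [DecidableEq W]
    (n T N : ℕ) (hV : Fintype.card V = n) (hW : Fintype.card W = n)
    (πs : V ≃ W) (A : Finset V) (hA : A.card = T)
    (nk : ℕ → ℕ) (hsum : ∑ k ∈ Finset.Icc 1 N, k * nk k ≤ T) :
    (Nat.card {σ : A → W // Injective σ ∧
        ∀ π : V ≃ W, (∀ a : A, π (a : V) = σ a) →
          ∀ k ∈ Finset.Icc 1 N,
            Set.ncard {v : V | v ∈ A ∧
              Function.minimalPeriod (π.symm ∘ πs) v = k ∧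
              ∀ i : ℕ, (π.symm ∘ πs)^[i] v ∈ A} = k * nk k} : ℝ)
      ≤ (n.descFactorial T : ℝ) /
          ∏ k ∈ Finset.Icc 1 N, ((k : ℝ) ^ nk k * (nk k).factorial) := by
  have key := CPAux.main_nat n T N hV hW πs A hA nk hsum
  have hprodpos : (0:ℝ) < ∏ k ∈ Finset.Icc 1 N, ((k : ℝ) ^ nk k * (nk k).factorial) := by
    apply Finset.prod_pos
    intro k hk
    have hk1 : 1 ≤ k := (Finset.mem_Icc.mp hk).1
    have : (0:ℝ) < (k:ℝ) := by exact_mod_cast hk1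
    positivity
  rw [le_div_iff₀ hprodpos]
  have := (Nat.cast_le (α := ℝ)).2 key
  push_cast at this
  exact this
end

section
/- The number of permutations of an n-element set that have at least n_k cycles of length k, simultaneously for each 1 ≤ k ≤ N (where n₁,…,n_N are nonnegative integers with Σ k·n_k ≤ n), is at most n! / (∏_{k=1}^N k^{n_k} · n_k!). -/
open Equiv Function Set

namespace MSC

section Aux
variable {n : ℕ} (σ : Equiv.Perm (Fin n))

lemma mem_pp (x : Fin n) : x ∈ periodicPts ⇑σ :=
  ⟨orderOf σ, orderOf_pos σ, by
    show (⇑σ)^[orderOf σ] x = x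
    rw [Equiv.Perm.iterate_eq_pow, pow_orderOf_eq_one]; rfl⟩

lemma mp_pos (x : Fin n) : 0 < minimalPeriod ⇑σ x :=
  minimalPeriod_pos_of_mem_periodicPts (mem_pp σ x)

lemma mp_pow_apply (x : Fin n) (a : ℕ) :
    minimalPeriod ⇑σ ((σ ^ a) x) = minimalPeriod ⇑σ x := by
  rw [← Equiv.Perm.iterate_eq_pow]
  exact minimalPeriod_apply_iterate (mem_pp σ x) a

lemma sameCycle_pow (x : Fin n) (a : ℕ) : σ.SameCycle x ((σ ^ a) x) :=
  ⟨(a : ℤ), by rw [zpow_natCast]⟩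

lemma sameCycle_iff_nat {x y : Fin n} :
    σ.SameCycle x y ↔ ∃ a : ℕ, a < minimalPeriod ⇑σ x ∧ (σ ^ a) x = y := by
  constructor
  · rintro h
    obtain ⟨i, -, rfl⟩ := h.exists_pow_eq'
    refine ⟨i % minimalPeriod ⇑σ x, Nat.mod_lt _ (mp_pos σ x), ?_⟩
    rw [← Equiv.Perm.iterate_eq_pow, ← Equiv.Perm.iterate_eq_pow]
    exact iterate_mod_minimalPeriod_eq
  · rintro ⟨a, -, rfl⟩
    exact sameCycle_pow σ x a

lemma pow_apply_mod (x : Fin n) (a : ℕ) :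
    (σ ^ (a % minimalPeriod ⇑σ x)) x = (σ ^ a) x := by
  rw [← Equiv.Perm.iterate_eq_pow, ← Equiv.Perm.iterate_eq_pow]
  exact iterate_mod_minimalPeriod_eq

lemma pow_apply_of_modEq {x : Fin n} {k a b : ℕ} (hx : minimalPeriod ⇑σ x = k)
    (h : a ≡ b [MOD k]) : (σ ^ a) x = (σ ^ b) x := by
  rw [← pow_apply_mod σ x a, ← pow_apply_mod σ x b, hx, h]

lemma pow_apply_inj {x : Fin n} {a b : ℕ} (ha : a < minimalPeriod ⇑σ x)
    (hb : b < minimalPeriod ⇑σ x) (h : (σ ^ a) x = (σ ^ b) x) : a = b := by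
  rw [← Equiv.Perm.iterate_eq_pow, ← Equiv.Perm.iterate_eq_pow] at h
  exact iterate_injOn_Iio_minimalPeriod ha hb h

-- class card bound
lemma class_card_le [DecidableEq (Fin n)] (x : Fin n) {k : ℕ} (hx : minimalPeriod ⇑σ x = k) :
    (Finset.univ.filter (fun y => σ.SameCycle x y)).card ≤ k := by
  have hsub : (Finset.univ.filter (fun y => σ.SameCycle x y)) ⊆
      Finset.image (fun i : Fin k => (σ ^ (i : ℕ)) x) Finset.univ := by
    intro y hy
    rw [Finset.mem_filter] at hy
    obtain ⟨a, ha, rfl⟩ := (sameCycle_iff_nat σ).mp hy.2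
    rw [hx] at ha
    exact Finset.mem_image.mpr ⟨⟨a, ha⟩, Finset.mem_univ _, rfl⟩
  calc _ ≤ (Finset.image (fun i : Fin k => (σ ^ (i : ℕ)) x) Finset.univ).card :=
        Finset.card_le_card hsub
    _ ≤ (Finset.univ : Finset (Fin k)).card := Finset.card_image_le
    _ = k := by simp

lemma exists_reps (k : ℕ) (hk : 0 < k) (c : ℕ)
    (hc : k * c ≤ Set.ncard {v : Fin n | minimalPeriod ⇑σ v = k}) :
    ∃ r : Fin c → Fin n, (∀ i, minimalPeriod ⇑σ (r i) = k) ∧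
      ∀ i j, σ.SameCycle (r i) (r j) → i = j := by
  classical
  induction c with
  | zero => exact ⟨Fin.elim0, fun i => i.elim0, fun i => i.elim0⟩
  | succ c ih =>
    obtain ⟨r, hr1, hr2⟩ := ih (le_trans (Nat.mul_le_mul_left k (Nat.le_succ c)) hc)
    -- find a new point
    set P : Finset (Fin n) := Finset.univ.filter (fun v => minimalPeriod ⇑σ v = k) with hP
    have hPcard : Set.ncard {v : Fin n | minimalPeriod ⇑σ v = k} = P.card := by
      rw [hP]
      rw [Set.ncard_eq_toFinset_card']
      congr 1
      ext v
      simp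
    set U : Finset (Fin n) :=
      Finset.univ.biUnion (fun i : Fin c => Finset.univ.filter (fun y => σ.SameCycle (r i) y))
      with hU
    have hUcard : U.card ≤ c * k := by
      calc U.card ≤ ∑ i : Fin c,
            (Finset.univ.filter (fun y => σ.SameCycle (r i) y)).card :=
            Finset.card_biUnion_le
        _ ≤ ∑ _i : Fin c, k := Finset.sum_le_sum (fun i _ => class_card_le σ (r i) (hr1 i))
        _ = c * k := by simp [mul_comm]
    have hex : ∃ x ∈ P, x ∉ U := by
      by_contra hcon
      push_neg at hcon
      have hsub : P ⊆ U := fun x hx => hcon x hx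
      have h1 := Finset.card_le_card hsub
      have h2 : k * (c + 1) = c * k + k := by ring
      omega
    obtain ⟨x, hxP, hxU⟩ := hex
    have hxperiod : minimalPeriod ⇑σ x = k := by
      have := Finset.mem_filter.mp hxP; exact this.2
    have hxnot : ∀ i : Fin c, ¬ σ.SameCycle (r i) x := by
      intro i hi
      exact hxU (Finset.mem_biUnion.mpr ⟨i, Finset.mem_univ _,
        Finset.mem_filter.mpr ⟨Finset.mem_univ _, hi⟩⟩)
    refine ⟨Fin.snoc r x, ?_, ?_⟩
    · intro i
      refine Fin.lastCases ?_ ?_ i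
      · simpa using hxperiod
      · intro j; simpa using hr1 j
    · intro i j
      refine Fin.lastCases ?_ ?_ i
      · refine Fin.lastCases ?_ ?_ j
        · intro _; rfl
        · intro j' h
          simp only [Fin.snoc_last, Fin.snoc_castSucc] at h
          exact absurd h.symm (hxnot j')
      · intro i'
        refine Fin.lastCases ?_ ?_ j
        · intro h
          simp only [Fin.snoc_last, Fin.snoc_castSucc] at h
          exact absurd h (hxnot i')
        · intro j' h
          simp only [Fin.snoc_castSucc] at h
          exact congrArg Fin.castSucc (hr2 i' j' h)

end Aux

abbrev E (N : ℕ) (nk : ℕ → ℕ) : Type := Σ k : ↥(Finset.Icc 1 N), Fin (nk ↑k) × Fin (↑k : ℕ)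
abbrev F (N : ℕ) (nk : ℕ → ℕ) : Type :=
  ∀ k : ↥(Finset.Icc 1 N), (Fin (nk ↑k) → Fin (↑k : ℕ)) × Equiv.Perm (Fin (nk ↑k))

lemma kpos {N : ℕ} (k : ↥(Finset.Icc 1 N)) : 0 < (↑k : ℕ) :=
  (Finset.mem_Icc.mp k.2).1

section Mono
variable {α : Type*}

open scoped Classical in
noncomputable def Mono (B : Set α) (A : Set α) : ↥(Bᶜ) → α :=
  if h : Nonempty (↥(Bᶜ) ≃ ↥(Aᶜ)) then fun x => ↑(Classical.choice h x) else fun x => ↑x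

variable {B A : Set α} (h : Nonempty (↥(Bᶜ) ≃ ↥(Aᶜ)))

include h in
lemma Mono_mem (x : ↥(Bᶜ)) : Mono B A x ∈ Aᶜ := by
  unfold Mono
  rw [dif_pos h]; exact (Classical.choice h x).2

include h in
lemma Mono_inj : Function.Injective (Mono B A) := by
  unfold Mono
  rw [dif_pos h]
  exact fun x y hxy => (Classical.choice h).injective (Subtype.ext hxy)

include h in
lemma Mono_surj {y : α} (hy : y ∈ Aᶜ) : ∃ x, Mono B A x = y := by
  unfold Mono
  rw [dif_pos h]
  exact ⟨(Classical.choice h).symm ⟨y, hy⟩, by simp⟩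


end Mono

section Tup
variable {n N : ℕ} {nk : ℕ → ℕ}
variable (σ : Equiv.Perm (Fin n)) (R : ∀ k : ↥(Finset.Icc 1 N), Fin (nk ↑k) → Fin n)
  (f : F N nk)

def tup (e : E N nk) : Fin n :=
  (σ ^ (((f e.1).1 e.2.1 : ℕ) + (e.2.2 : ℕ))) (R e.1 ((f e.1).2 e.2.1))

def Tset : Set (Fin n) := {y | ∃ (k : ↥(Finset.Icc 1 N)) (j : Fin (nk ↑k)), σ.SameCycle (R k j) y}

def succE (e : E N nk) : E N nk :=
  ⟨e.1, e.2.1, ⟨((e.2.2 : ℕ) + 1) % ↑e.1, Nat.mod_lt _ (kpos e.1)⟩⟩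

variable {σ R}
variable (hR1 : ∀ (k : ↥(Finset.Icc 1 N)) (j : Fin (nk ↑k)), minimalPeriod ⇑σ (R k j) = ↑k)
  (hR2 : ∀ (k : ↥(Finset.Icc 1 N)) (j j' : Fin (nk ↑k)), σ.SameCycle (R k j) (R k j') → j = j')

lemma tup_mem (e : E N nk) : tup σ R f e ∈ Tset σ R :=
  ⟨e.1, (f e.1).2 e.2.1, sameCycle_pow σ _ _⟩

include hR1 hR2 in
lemma tup_inj : Function.Injective (tup σ R f) := by
  rintro ⟨k, j, i⟩ ⟨k', j', i'⟩ h
  unfold tup at h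
  simp only at h
  -- the two base points
  have hk : (↑k : ℕ) = (↑k' : ℕ) := by
    have h1 : minimalPeriod ⇑σ ((σ ^ (((f k).1 j : ℕ) + (i : ℕ))) (R k ((f k).2 j))) = ↑k := by
      rw [mp_pow_apply, hR1]
    have h2 : minimalPeriod ⇑σ ((σ ^ (((f k').1 j' : ℕ) + (i' : ℕ))) (R k' ((f k').2 j'))) = ↑k' := by
      rw [mp_pow_apply, hR1]
    rw [h, h2] at h1; exact h1.symm
  have hkk : k = k' := Subtype.ext hk
  subst hkk
  have hsc : σ.SameCycle (R k ((f k).2 j)) (R k ((f k).2 j')) := by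
    have s1 := sameCycle_pow σ (R k ((f k).2 j)) (((f k).1 j : ℕ) + (i : ℕ))
    have s2 := sameCycle_pow σ (R k ((f k).2 j')) (((f k).1 j' : ℕ) + (i' : ℕ))
    rw [← h] at s2
    exact s1.trans s2.symm
  have hjj : j = j' := (f k).2.injective (hR2 k _ _ hsc)
  subst hjj
  -- now exponents
  have hmod : (((f k).1 j : ℕ) + (i : ℕ)) % ↑k = (((f k).1 j : ℕ) + (i' : ℕ)) % ↑k := by
    have e1 := pow_apply_mod σ (R k ((f k).2 j)) (((f k).1 j : ℕ) + (i : ℕ))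
    have e2 := pow_apply_mod σ (R k ((f k).2 j)) (((f k).1 j : ℕ) + (i' : ℕ))
    rw [hR1] at e1 e2
    rw [← h] at e2
    exact pow_apply_inj σ
      (by rw [hR1]; exact Nat.mod_lt _ (kpos k)) (by rw [hR1]; exact Nat.mod_lt _ (kpos k))
      (e1.trans e2.symm)
  have hii : (i : ℕ) = (i' : ℕ) := by
    have h2 := Nat.ModEq.add_left_cancel' ((f k).1 j : ℕ) hmod
    rwa [Nat.ModEq, Nat.mod_eq_of_lt i.2, Nat.mod_eq_of_lt i'.2] at h2
  have : i = i' := Fin.ext hii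
  subst this
  rfl

include hR1 in
lemma range_tup : Set.range (tup σ R f) = Tset σ R := by
  apply Set.Subset.antisymm
  · rintro y ⟨e, rfl⟩; exact tup_mem f e
  · rintro y ⟨k, j, hsc⟩
    rw [sameCycle_iff_nat, hR1] at hsc
    obtain ⟨a, ha, rfl⟩ := hsc
    set π := (f k).2 with hπ
    set j0 := π.symm j with hj0
    set ρ := ((f k).1 j0 : ℕ) with hρ
    have hρlt : ρ < ↑k := ((f k).1 j0).2
    refine ⟨⟨k, j0, ⟨(a + ↑k - ρ) % ↑k, Nat.mod_lt _ (kpos k)⟩⟩, ?_⟩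
    show (σ ^ (ρ + (a + ↑k - ρ) % ↑k)) (R k (π j0)) = (σ ^ a) (R k j)
    rw [hj0, Equiv.apply_symm_apply]
    refine pow_apply_of_modEq σ (hR1 k j) ?_
    calc ρ + (a + ↑k - ρ) % ↑k ≡ ρ + (a + ↑k - ρ) [MOD ↑k] :=
          Nat.ModEq.add_left ρ (Nat.mod_modEq _ _)
      _ = a + ↑k := by omega
      _ ≡ a [MOD ↑k] := by rw [Nat.ModEq, Nat.add_mod_right]

include hR1 in
lemma apply_tup (e : E N nk) : σ (tup σ R f e) = tup σ R f (succE e) := by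
  obtain ⟨k, j, i⟩ := e
  show σ ((σ ^ (((f k).1 j : ℕ) + (i : ℕ))) (R k ((f k).2 j))) = _
  rw [← Equiv.Perm.mul_apply, ← pow_succ']
  show _ = (σ ^ (((f k).1 j : ℕ) + ((i : ℕ) + 1) % ↑k)) (R k ((f k).2 j))
  refine pow_apply_of_modEq σ (hR1 k ((f k).2 j)) ?_
  calc ((f k).1 j : ℕ) + (i : ℕ) + 1 ≡ ((f k).1 j : ℕ) + ((i : ℕ) + 1) [MOD ↑k] := by
        rw [add_assoc]
    _ ≡ ((f k).1 j : ℕ) + ((i : ℕ) + 1) % ↑k [MOD ↑k] :=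
        Nat.ModEq.add_left _ (Nat.mod_modEq _ _).symm

lemma Tset_apply_mem {y : Fin n} (hy : σ y ∈ Tset σ R) : y ∈ Tset σ R := by
  obtain ⟨k, j, hsc⟩ := hy
  exact ⟨k, j, (Equiv.Perm.sameCycle_apply_right).mp hsc⟩

end Tup

section Phi
variable {n N : ℕ} {nk : ℕ → ℕ}
variable (σ : Equiv.Perm (Fin n)) (R : ∀ k : ↥(Finset.Icc 1 N), Fin (nk ↑k) → Fin n)
  (f : F N nk) (s : E N nk ↪ Fin n)

open scoped Classical in
noncomputable def phi : Fin n → Fin n := fun x =>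
  if h : x ∈ Set.range ⇑s then tup σ R f (Set.mem_range.mp h).choose
  else σ (Mono (Set.range ⇑s) (Tset σ R) ⟨x, h⟩)

lemma phi_apply_s (e : E N nk) : phi σ R f s (s e) = tup σ R f e := by
  unfold phi
  have he : s e ∈ Set.range ⇑s := ⟨e, rfl⟩
  rw [dif_pos he]
  exact congrArg (tup σ R f) (s.injective (Set.mem_range.mp he).choose_spec)

lemma phi_apply_not {x : Fin n} (h : x ∉ Set.range ⇑s) :
    phi σ R f s x = σ (Mono (Set.range ⇑s) (Tset σ R) ⟨x, h⟩) := by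
  unfold phi
  rw [dif_neg h]

variable {σ R}
variable (hR1 : ∀ (k : ↥(Finset.Icc 1 N)) (j : Fin (nk ↑k)), minimalPeriod ⇑σ (R k j) = ↑k)
  (hR2 : ∀ (k : ↥(Finset.Icc 1 N)) (j j' : Fin (nk ↑k)), σ.SameCycle (R k j) (R k j') → j = j')
  (hne : Nonempty (↥((Set.range ⇑s)ᶜ) ≃ ↥((Tset σ R)ᶜ)))

include hR1 hR2 hne in
lemma phi_inj : Function.Injective (phi σ R f s) := by
  intro x y hxy
  by_cases hx : x ∈ Set.range ⇑s <;> by_cases hy : y ∈ Set.range ⇑s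
  · obtain ⟨ex, rfl⟩ := hx
    obtain ⟨ey, rfl⟩ := hy
    rw [phi_apply_s, phi_apply_s] at hxy
    exact congrArg ⇑s (tup_inj f hR1 hR2 hxy)
  · exfalso
    obtain ⟨ex, rfl⟩ := hx
    rw [phi_apply_s, phi_apply_not σ R f s hy] at hxy
    have h1 : tup σ R f ex ∈ Tset σ R := tup_mem f ex
    have h2 : Mono (Set.range ⇑s) (Tset σ R) ⟨y, hy⟩ ∈ (Tset σ R)ᶜ := Mono_mem hne _
    rw [hxy] at h1
    exact h2 (Tset_apply_mem h1)
  · exfalso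
    obtain ⟨ey, rfl⟩ := hy
    rw [phi_apply_s, phi_apply_not σ R f s hx] at hxy
    have h1 : tup σ R f ey ∈ Tset σ R := tup_mem f ey
    have h2 : Mono (Set.range ⇑s) (Tset σ R) ⟨x, hx⟩ ∈ (Tset σ R)ᶜ := Mono_mem hne _
    rw [← hxy] at h1
    exact h2 (Tset_apply_mem h1)
  · rw [phi_apply_not σ R f s hx, phi_apply_not σ R f s hy] at hxy
    have := Mono_inj hne (σ.injective hxy)
    exact congrArg Subtype.val this

end Phi



lemma card_E (N : ℕ) (nk : ℕ → ℕ) :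
    Fintype.card (E N nk) = ∑ k ∈ Finset.Icc 1 N, k * nk k := by
  calc Fintype.card (E N nk) = ∑ k : ↥(Finset.Icc 1 N), nk ↑k * ↑k := by
        simp [Fintype.card_sigma]
    _ = ∑ k ∈ Finset.Icc 1 N, nk k * k := Finset.sum_coe_sort (Finset.Icc 1 N) (fun k => nk k * k)
    _ = ∑ k ∈ Finset.Icc 1 N, k * nk k := Finset.sum_congr rfl fun k _ => Nat.mul_comm _ _

lemma card_F (N : ℕ) (nk : ℕ → ℕ) :
    Nat.card (F N nk) = ∏ k ∈ Finset.Icc 1 N, (k ^ nk k * (nk k).factorial) := by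
  classical
  calc Nat.card (F N nk)
      = ∏ k : ↥(Finset.Icc 1 N), Nat.card ((Fin (nk ↑k) → Fin (↑k : ℕ)) × Equiv.Perm (Fin (nk ↑k))) :=
        Nat.card_pi
    _ = ∏ k : ↥(Finset.Icc 1 N), ((↑k : ℕ) ^ nk ↑k * (nk ↑k).factorial) := by
        refine Finset.prod_congr rfl fun k _ => ?_
        simp [Nat.card_prod, Nat.card_eq_fintype_card, Fintype.card_fun, Fintype.card_perm]
    _ = ∏ k ∈ Finset.Icc 1 N, (k ^ nk k * (nk k).factorial) := Finset.prod_coe_sort (Finset.Icc 1 N) (fun k => k ^ nk k * (nk k).factorial)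

theorem key (n N : ℕ) (nk : ℕ → ℕ) (hsum : ∑ k ∈ Finset.Icc 1 N, k * nk k ≤ n) :
    Nat.card {σ : Equiv.Perm (Fin n) // ∀ k ∈ Finset.Icc 1 N,
        k * nk k ≤ Set.ncard {v : Fin n | Function.minimalPeriod σ v = k}} *
      ∏ k ∈ Finset.Icc 1 N, (k ^ nk k * (nk k).factorial) ≤ n.factorial := by
  classical
  set S := {σ : Equiv.Perm (Fin n) // ∀ k ∈ Finset.Icc 1 N,
      k * nk k ≤ Set.ncard {v : Fin n | Function.minimalPeriod σ v = k}} with hSdef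
  have hcard : Fintype.card (E N nk) ≤ Fintype.card (Fin n) := by
    rw [card_E, Fintype.card_fin]; exact hsum
  obtain ⟨s⟩ := Function.Embedding.nonempty_of_card_le hcard
  have hrep : ∀ (σ : S) (k : ↥(Finset.Icc 1 N)), ∃ r : Fin (nk ↑k) → Fin n,
      (∀ i, minimalPeriod ⇑σ.1 (r i) = ↑k) ∧ ∀ i j, σ.1.SameCycle (r i) (r j) → i = j :=
    fun σ k => exists_reps σ.1 ↑k (kpos k) (nk ↑k) (σ.2 ↑k k.2)
  choose R hR1 hR2 using hrep
  have f0 : F N nk := fun k => ⟨fun _ => ⟨0, kpos k⟩, 1⟩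
  have hne : ∀ σ : S, Nonempty (↥((Set.range ⇑s)ᶜ) ≃ ↥((Tset σ.1 (R σ))ᶜ)) := by
    intro σ
    refine Finite.card_eq.mp ?_
    have h1 : (Set.range ⇑s).ncard = Fintype.card (E N nk) := by
      rw [← Nat.card_coe_set_eq, Nat.card_range_of_injective s.injective,
        Nat.card_eq_fintype_card]
    have h2 : (Tset σ.1 (R σ)).ncard = Fintype.card (E N nk) := by
      rw [← range_tup f0 (hR1 σ), ← Nat.card_coe_set_eq,
        Nat.card_range_of_injective (tup_inj f0 (hR1 σ) (hR2 σ)), Nat.card_eq_fintype_card]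
    have c1 := Set.ncard_add_ncard_compl (Set.range ⇑s)
    have c2 := Set.ncard_add_ncard_compl (Tset σ.1 (R σ))
    rw [Nat.card_coe_set_eq, Nat.card_coe_set_eq]
    omega
  set Φ : S × F N nk → Equiv.Perm (Fin n) := fun p =>
    Equiv.ofBijective (phi p.1.1 (R p.1) p.2 s)
      (Finite.injective_iff_bijective.mp (phi_inj p.2 s (hR1 p.1) (hR2 p.1) (hne p.1)))
    with hΦdef
  have hΦinj : Function.Injective Φ := by
    rintro ⟨σ, f⟩ ⟨σ', f'⟩ hΦ
    have hfun : ∀ x, phi σ.1 (R σ) f s x = phi σ'.1 (R σ') f' s x := by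
      intro x
      have := DFunLike.congr_fun hΦ x
      simpa [hΦdef] using this
    have ht : tup σ.1 (R σ) f = tup σ'.1 (R σ') f' := by
      funext e
      have h1 := phi_apply_s σ.1 (R σ) f s e
      have h2 := phi_apply_s σ'.1 (R σ') f' s e
      exact (h1.symm.trans (hfun (s e))).trans h2
    have hT : Tset σ.1 (R σ) = Tset σ'.1 (R σ') := by
      rw [← range_tup f (hR1 σ), ht, range_tup f' (hR1 σ')]
    have hperm : σ.1 = σ'.1 := by
      apply Equiv.ext
      intro y
      by_cases hy : y ∈ Tset σ.1 (R σ)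
      · rw [← range_tup f (hR1 σ)] at hy
        obtain ⟨e, rfl⟩ := hy
        calc σ.1 (tup σ.1 (R σ) f e) = tup σ.1 (R σ) f (succE e) := apply_tup f (hR1 σ) e
          _ = tup σ'.1 (R σ') f' (succE e) := congrFun ht _
          _ = σ'.1 (tup σ'.1 (R σ') f' e) := (apply_tup f' (hR1 σ') e).symm
          _ = σ'.1 (tup σ.1 (R σ) f e) := by rw [ht]
      · obtain ⟨x, hx⟩ := Mono_surj (hne σ) hy
        have hxval : (x : Fin n) ∉ Set.range ⇑s := x.2
        have e1 : phi σ.1 (R σ) f s ↑x = σ.1 (Mono (Set.range ⇑s) (Tset σ.1 (R σ)) x) :=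
          phi_apply_not σ.1 (R σ) f s hxval
        have e2 : phi σ'.1 (R σ') f' s ↑x = σ'.1 (Mono (Set.range ⇑s) (Tset σ.1 (R σ)) x) := by
          rw [phi_apply_not σ'.1 (R σ') f' s hxval, hT]
        rw [← hx, ← e1, ← e2]
        exact hfun ↑x
    have hσ : σ = σ' := Subtype.ext hperm
    subst hσ
    have hf : f = f' := by
      funext k
      have hk1 : ∀ j : Fin (nk ↑k), (f k).2 j = (f' k).2 j ∧ ((f k).1 j : ℕ) = ((f' k).1 j : ℕ) := by
        intro j
        have he : (σ.1 ^ (((f k).1 j : ℕ) + (0 : ℕ))) (R σ k ((f k).2 j)) =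
            (σ.1 ^ (((f' k).1 j : ℕ) + (0 : ℕ))) (R σ k ((f' k).2 j)) :=
          congrFun ht ⟨k, j, ⟨0, kpos k⟩⟩
        have hsc : σ.1.SameCycle (R σ k ((f k).2 j)) (R σ k ((f' k).2 j)) := by
          have s1 := sameCycle_pow σ.1 (R σ k ((f k).2 j)) (((f k).1 j : ℕ) + (0 : ℕ))
          have s2 := sameCycle_pow σ.1 (R σ k ((f' k).2 j)) (((f' k).1 j : ℕ) + (0 : ℕ))
          rw [← he] at s2
          exact s1.trans s2.symm
        have hj := hR2 σ k _ _ hsc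
        refine ⟨hj, ?_⟩
        rw [← hj] at he
        simp only [add_zero] at he
        refine pow_apply_inj σ.1 ?_ ?_ he
        · rw [hR1]; exact ((f k).1 j).2
        · rw [hR1]; exact ((f' k).1 j).2
      have h2 : (f k).2 = (f' k).2 := Equiv.ext fun j => (hk1 j).1
      have h1 : (f k).1 = (f' k).1 := funext fun j => Fin.ext (hk1 j).2
      exact Prod.ext h1 h2
    rw [hf]
  calc Nat.card S * ∏ k ∈ Finset.Icc 1 N, (k ^ nk k * (nk k).factorial)
      = Nat.card S * Nat.card (F N nk) := by rw [card_F]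
    _ = Nat.card (S × F N nk) := (Nat.card_prod _ _).symm
    _ ≤ Nat.card (Equiv.Perm (Fin n)) := Nat.card_le_card_of_injective Φ hΦinj
    _ = n.factorial := by
        rw [Nat.card_eq_fintype_card, Fintype.card_perm, Fintype.card_fin]

end MSC


/-- The number of permutations of an `n`-element set having at least `n_k` cycles of length
`k` simultaneously for each `1 ≤ k ≤ N` (equivalently, at least `k·n_k` points of minimal
period `k`) is at most `n! / ∏_{k=1}^N k^{n_k} n_k!`. -/
theorem count_permutations_with_many_short_cycles
    (n N : ℕ) (nk : ℕ → ℕ) (hsum : ∑ k ∈ Finset.Icc 1 N, k * nk k ≤ n) :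
    (Nat.card {σ : Equiv.Perm (Fin n) // ∀ k ∈ Finset.Icc 1 N,
        k * nk k ≤ Set.ncard {v : Fin n | Function.minimalPeriod σ v = k}} : ℝ)
      ≤ (n.factorial : ℝ) /
          ∏ k ∈ Finset.Icc 1 N, ((k : ℝ) ^ nk k * (nk k).factorial) := by
  have hkey := MSC.key n N nk hsum
  have hpos : 0 < ∏ k ∈ Finset.Icc 1 N, ((k : ℝ) ^ nk k * (nk k).factorial) := by
    apply Finset.prod_pos
    intro k hk
    have hk1 : 1 ≤ k := (Finset.mem_Icc.mp hk).1
    have hk0 : (0 : ℝ) < k := by exact_mod_cast hk1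
    exact mul_pos (pow_pos hk0 _) (by exact_mod_cast (nk k).factorial_pos)
  rw [le_div_iff₀ hpos]
  calc (Nat.card {σ : Equiv.Perm (Fin n) // ∀ k ∈ Finset.Icc 1 N,
        k * nk k ≤ Set.ncard {v : Fin n | Function.minimalPeriod σ v = k}} : ℝ) *
          ∏ k ∈ Finset.Icc 1 N, ((k : ℝ) ^ nk k * (nk k).factorial)
      = ((Nat.card {σ : Equiv.Perm (Fin n) // ∀ k ∈ Finset.Icc 1 N,
          k * nk k ≤ Set.ncard {v : Fin n | Function.minimalPeriod σ v = k}} *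
            ∏ k ∈ Finset.Icc 1 N, (k ^ nk k * (nk k).factorial) : ℕ) : ℝ) := by
        push_cast; ring
    _ ≤ (n.factorial : ℝ) := by exact_mod_cast hkey
end

section
/- Let N ≥ 1, let α_k = (k−1)/k for 1 ≤ k ≤ N, and let α_{N+1} ∈ (α_N, 1]. Fix ϱ > 1 and η with 0 < η < (ϱ−1)/4 small enough that α_{N+1}(ϱ−η) > 1. Then there exist δ, δ₀ > 0 such that: for all reals T > 0 and nonnegative reals n₁,…,n_N with n₁ ≤ δT and Σ_{k=1}^N k n_k ≤ T, and all nonnegative reals x₀,…,x_{N+1} satisfying (a) Σ_{k=0}^{N+1} x_k ≥ (ϱ−η)T and (b) Σ_{k=1}^m x_k ≤ (ϱ+η) Σ_{k=1}^m k n_k for every 1 ≤ m ≤ N, one has Σ_{k=1}^N n_k − T + x₀ + Σ_{k=1}^{N+1} α_k x_k ≥ δ₀ T. -/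
set_option maxHeartbeats 1000000 in
/-- Key algebraic minimization lemma. With `α_k = (k−1)/k` for `1 ≤ k ≤ N` and
`α_{N+1} ∈ (α_N, 1]`, `ϱ > 1`, `0 < η < (ϱ−1)/4` with `α_{N+1}(ϱ−η) > 1`, there exist
`δ, δ₀ > 0` such that for all `T > 0`, nonnegative `n₁,…,n_N` with `n₁ ≤ δT` and
`Σ k n_k ≤ T`, and all nonnegative `x₀,…,x_{N+1}` with `Σ x_k ≥ (ϱ−η)T` and partial-sum
constraints `Σ_{k≤m} x_k ≤ (ϱ+η) Σ_{k≤m} k n_k` (1 ≤ m ≤ N), one has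
`Σ n_k − T + x₀ + Σ α_k x_k ≥ δ₀ T`. -/
theorem minimization_lemma
    (N : ℕ) (hN : 1 ≤ N) (αN1 ϱ η : ℝ)
    (hα1 : ((N : ℝ) - 1) / N < αN1) (hα2 : αN1 ≤ 1)
    (hϱ : 1 < ϱ) (hη0 : 0 < η) (hη1 : η < (ϱ - 1) / 4)
    (hbig : 1 < αN1 * (ϱ - η)) :
    ∃ δ > (0 : ℝ), ∃ δ₀ > (0 : ℝ),
      ∀ T : ℝ, 0 < T →
      ∀ n : ℕ → ℝ, (∀ k, 0 ≤ n k) →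
        n 1 ≤ δ * T →
        (∑ k ∈ Finset.Icc 1 N, (k : ℝ) * n k) ≤ T →
      ∀ x : ℕ → ℝ, (∀ k, 0 ≤ x k) →
        (ϱ - η) * T ≤ ∑ k ∈ Finset.range (N + 2), x k →
        (∀ m ∈ Finset.Icc 1 N,
          ∑ k ∈ Finset.Icc 1 m, x k ≤ (ϱ + η) * ∑ k ∈ Finset.Icc 1 m, (k : ℝ) * n k) →
        δ₀ * T ≤ (∑ k ∈ Finset.Icc 1 N, n k) - T + x 0
          + (∑ k ∈ Finset.Icc 1 N, ((k : ℝ) - 1) / (k : ℝ) * x k) + αN1 * x (N + 1) := by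
  have hN1 : (1:ℝ) ≤ (N:ℝ) := by exact_mod_cast hN
  have hA0 : 0 < αN1 := lt_of_le_of_lt (div_nonneg (by linarith) (by linarith)) hα1
  have hP1 : (1:ℝ) < ϱ + η := by linarith
  have hP0 : (0:ℝ) < ϱ + η := by linarith
  have hη4 : 4 * η < ϱ - 1 := by linarith
  set ε := min (αN1 * (ϱ - η) - 1) ((ϱ - 1 - 3*η)/2) with hεdef
  have hε0 : 0 < ε := lt_min (by linarith) (by linarith)
  refine ⟨ε/(2*(ϱ+η)), by positivity, ε/2, by positivity, ?_⟩
  intro T hT n hn hn1 hnT x hx hxtot hxpart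
  set γ : ℕ → ℝ := fun k => αN1 - ((k:ℝ)-1)/(k:ℝ) with hγdef
  -- positivity of γ on [1,N]
  have hγpos : ∀ k, 1 ≤ k → k ≤ N → 0 ≤ γ k := by
    intro k hk1 hkN
    have hk0 : (1:ℝ) ≤ (k:ℝ) := by exact_mod_cast hk1
    have hkN' : (k:ℝ) ≤ N := by exact_mod_cast hkN
    have hdiv : ((k:ℝ)-1)/k ≤ ((N:ℝ)-1)/N := by
      rw [div_le_div_iff₀ (by linarith) (by linarith)]
      nlinarith
    simp only [hγdef]
    linarith
  have hγmono : ∀ k : ℕ, 1 ≤ k → γ (k+1) ≤ γ k := by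
    intro k hk1
    have hk0 : (1:ℝ) ≤ (k:ℝ) := by exact_mod_cast hk1
    have hdiv : ((k:ℝ)-1)/k ≤ (((k:ℝ)+1)-1)/((k:ℝ)+1) := by
      rw [div_le_div_iff₀ (by linarith) (by linarith)]
      nlinarith
    simp only [hγdef]
    push_cast
    linarith
  -- Abel summation key lemma
  have key : ∀ m, 1 ≤ m → m ≤ N →
      (∑ k ∈ Finset.Icc 1 m, γ k * x k)
        + γ m * ((ϱ+η) * (∑ k ∈ Finset.Icc 1 m, (k:ℝ) * n k) - ∑ k ∈ Finset.Icc 1 m, x k)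
      ≤ (ϱ+η) * ∑ k ∈ Finset.Icc 1 m, γ k * ((k:ℝ) * n k) := by
    intro m hm1
    induction m, hm1 using Nat.le_induction with
    | base =>
      intro _
      simp only [Finset.Icc_self, Finset.sum_singleton, Nat.cast_one]
      apply le_of_eq
      ring
    | succ m hm1 ih =>
      intro hmN
      have hmN' : m ≤ N := by omega
      have ih' := ih hmN'
      have hslack := hxpart m (Finset.mem_Icc.mpr ⟨hm1, hmN'⟩)
      have hmono := hγmono m hm1
      have hnn : 0 ≤ (ϱ+η) * (∑ k ∈ Finset.Icc 1 m, (k:ℝ) * n k)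
          - ∑ k ∈ Finset.Icc 1 m, x k := by linarith
      have hprod := mul_le_mul_of_nonneg_right hmono hnn
      rw [Finset.sum_Icc_succ_top (by omega : 1 ≤ m + 1),
          Finset.sum_Icc_succ_top (by omega : 1 ≤ m + 1),
          Finset.sum_Icc_succ_top (by omega : 1 ≤ m + 1),
          Finset.sum_Icc_succ_top (by omega : 1 ≤ m + 1)]
      push_cast
      nlinarith [hprod, ih']
  -- abbreviations (as plain terms)
  have hsplit : ∑ k ∈ Finset.range (N+2), x k
      = x 0 + (∑ k ∈ Finset.Icc 1 N, x k) + x (N+1) := by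
    have h : (∑ k ∈ Finset.Icc 1 N, x k) = ∑ k ∈ Finset.range N, x (k+1) := by
      rw [← Finset.Ico_add_one_right_eq_Icc, Finset.sum_Ico_eq_sum_range]
      exact Finset.sum_congr rfl (fun i _ => by rw [Nat.add_comm 1 i])
    rw [Finset.sum_range_succ, Finset.sum_range_succ', h]
    ring
  have hQT : (ϱ - η) * T ≤ x 0 + (∑ k ∈ Finset.Icc 1 N, x k) + x (N+1) := by
    rw [← hsplit]; exact hxtot
  -- step 1
  have h1 : αN1 * ((ϱ-η)*T - (∑ k ∈ Finset.Icc 1 N, x k)) ≤ x 0 + αN1 * x (N+1) := by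
    have e1 : αN1 * ((ϱ-η)*T - (∑ k ∈ Finset.Icc 1 N, x k)) ≤ αN1 * (x 0 + x (N+1)) :=
      mul_le_mul_of_nonneg_left (by linarith) hA0.le
    nlinarith [mul_nonneg (sub_nonneg.mpr hα2) (hx 0)]
  -- rewrite objective sum
  have hobj : (∑ k ∈ Finset.Icc 1 N, ((k:ℝ)-1)/(k:ℝ) * x k)
      = αN1 * (∑ k ∈ Finset.Icc 1 N, x k) - (∑ k ∈ Finset.Icc 1 N, γ k * x k) := by
    rw [Finset.mul_sum, ← Finset.sum_sub_distrib]
    exact Finset.sum_congr rfl fun k _ => by simp only [hγdef]; ring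
  -- step 3: bound G
  have hG : (∑ k ∈ Finset.Icc 1 N, γ k * x k)
      ≤ (ϱ+η) * ∑ k ∈ Finset.Icc 1 N, γ k * ((k:ℝ) * n k) := by
    have hk := key N hN le_rfl
    have hsl := hxpart N (Finset.mem_Icc.mpr ⟨hN, le_rfl⟩)
    have hγN := hγpos N hN le_rfl
    nlinarith [mul_nonneg hγN (by linarith : (0:ℝ) ≤ (ϱ+η) * (∑ k ∈ Finset.Icc 1 N, (k:ℝ) * n k) - ∑ k ∈ Finset.Icc 1 N, x k)]
  -- step 4: rewrite the n-sum
  have hswap : (∑ k ∈ Finset.Icc 1 N, γ k * ((k:ℝ)*n k))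
      = ∑ k ∈ Finset.Icc 1 N, ((k:ℝ)*αN1 - (k:ℝ) + 1) * n k := by
    refine Finset.sum_congr rfl fun k hk => ?_
    have hk1 : 1 ≤ k := (Finset.mem_Icc.mp hk).1
    have hk0 : ((k:ℝ)) ≠ 0 := Nat.cast_ne_zero.mpr (by omega)
    simp only [hγdef]
    field_simp
    ring
  -- collect n-terms with weights H k = 1 - (ϱ+η)(k αN1 - k + 1)
  have hsum_n : (∑ k ∈ Finset.Icc 1 N, n k)
      - (ϱ+η) * (∑ k ∈ Finset.Icc 1 N, ((k:ℝ)*αN1 - (k:ℝ) + 1) * n k)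
      = ∑ k ∈ Finset.Icc 1 N, (1 - (ϱ+η)*((k:ℝ)*αN1 - (k:ℝ) + 1)) * n k := by
    rw [Finset.mul_sum, ← Finset.sum_sub_distrib]
    exact Finset.sum_congr rfl fun k _ => by ring
  -- split off k = 1
  have hIcc : Finset.Icc 1 N = insert 1 (Finset.Icc 2 N) := by
    ext a; simp only [Finset.mem_Icc, Finset.mem_insert]; omega
  have h1notin : (1:ℕ) ∉ Finset.Icc 2 N := by simp
  set c := min 0 ((1 + (ϱ+η) - 2*(ϱ+η)*αN1)/2) with hcdef
  have hc0 : c ≤ 0 := min_le_left _ _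
  -- tail bound
  have htail : ∀ k ∈ Finset.Icc 2 N,
      c * ((k:ℝ) * n k) ≤ (1 - (ϱ+η)*((k:ℝ)*αN1 - (k:ℝ) + 1)) * n k := by
    intro k hk
    have hk2 : (2:ℝ) ≤ (k:ℝ) := by exact_mod_cast (Finset.mem_Icc.mp hk).1
    have hck : c * (k:ℝ) ≤ 1 - (ϱ+η)*((k:ℝ)*αN1 - (k:ℝ) + 1) := by
      by_cases h2 : 0 ≤ 1 + (ϱ+η) - 2*(ϱ+η)*αN1
      · have hc : c = 0 := min_eq_left (by linarith)
        rw [hc, zero_mul]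
        nlinarith [mul_nonneg (mul_nonneg hP0.le (by linarith : (0:ℝ) ≤ (k:ℝ) - 2)) (sub_nonneg.mpr hα2)]
      · have hc : c = (1 + (ϱ+η) - 2*(ϱ+η)*αN1)/2 := min_eq_right (by linarith)
        rw [hc]
        nlinarith [mul_nonneg (by linarith : (0:ℝ) ≤ ϱ + η - 1) (by linarith : (0:ℝ) ≤ (k:ℝ) - 2)]
    calc c * ((k:ℝ) * n k) = (c * (k:ℝ)) * n k := by ring
    _ ≤ (1 - (ϱ+η)*((k:ℝ)*αN1 - (k:ℝ) + 1)) * n k := mul_le_mul_of_nonneg_right hck (hn k)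
  have htail_sum : c * T ≤ ∑ k ∈ Finset.Icc 2 N, (1 - (ϱ+η)*((k:ℝ)*αN1 - (k:ℝ) + 1)) * n k := by
    have h1 : (∑ k ∈ Finset.Icc 2 N, c * ((k:ℝ) * n k))
        ≤ ∑ k ∈ Finset.Icc 2 N, (1 - (ϱ+η)*((k:ℝ)*αN1 - (k:ℝ) + 1)) * n k :=
      Finset.sum_le_sum htail
    have h2 : (∑ k ∈ Finset.Icc 2 N, (k:ℝ) * n k) ≤ T := by
      have := hnT
      rw [hIcc, Finset.sum_insert h1notin] at this
      have hn1' := hn 1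
      push_cast at this
      linarith
    have h3 : c * T ≤ c * (∑ k ∈ Finset.Icc 2 N, (k:ℝ) * n k) :=
      mul_le_mul_of_nonpos_left h2 hc0
    rw [Finset.mul_sum] at h3
    linarith
  -- k = 1 bound
  have hhead : -(ε/2) * T ≤ (1 - (ϱ+η)*((1:ℝ)*αN1 - (1:ℝ) + 1)) * n 1 := by
    have hH1 : -(ϱ+η) ≤ 1 - (ϱ+η)*((1:ℝ)*αN1 - (1:ℝ) + 1) := by
      nlinarith [mul_nonneg hP0.le (sub_nonneg.mpr hα2)]
    have e1 : -(ϱ+η) * n 1 ≤ (1 - (ϱ+η)*((1:ℝ)*αN1 - (1:ℝ) + 1)) * n 1 :=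
      mul_le_mul_of_nonneg_right hH1 (hn 1)
    have e2 : (ϱ+η) * n 1 ≤ (ϱ+η) * (ε/(2*(ϱ+η)) * T) :=
      mul_le_mul_of_nonneg_left hn1 hP0.le
    have e3 : (ϱ+η) * (ε/(2*(ϱ+η)) * T) = (ε/2) * T := by
      field_simp
    linarith
  -- margin
  have hmargin : ε ≤ αN1 * (ϱ-η) - 1 + c := by
    by_cases h2 : 0 ≤ 1 + (ϱ+η) - 2*(ϱ+η)*αN1
    · have hc : c = 0 := min_eq_left (by linarith)
      rw [hc]
      have := min_le_left (αN1 * (ϱ - η) - 1) ((ϱ - 1 - 3*η)/2)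
      linarith
    · have hc : c = (1 + (ϱ+η) - 2*(ϱ+η)*αN1)/2 := min_eq_right (by linarith)
      have h4 : ε ≤ (ϱ - 1 - 3*η)/2 := min_le_right _ _
      rw [hc]
      nlinarith [mul_nonneg hη0.le (sub_nonneg.mpr hα2)]
  -- final assembly
  have hfull : (∑ k ∈ Finset.Icc 1 N, (1 - (ϱ+η)*((k:ℝ)*αN1 - (k:ℝ) + 1)) * n k)
      = (1 - (ϱ+η)*((1:ℝ)*αN1 - (1:ℝ) + 1)) * n 1
        + ∑ k ∈ Finset.Icc 2 N, (1 - (ϱ+η)*((k:ℝ)*αN1 - (k:ℝ) + 1)) * n k := by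
    rw [hIcc, Finset.sum_insert h1notin]
    push_cast
    ring
  have hmT : ε * T ≤ (αN1 * (ϱ-η) - 1 + c) * T := mul_le_mul_of_nonneg_right hmargin hT.le
  rw [hobj]
  nlinarith [h1, hG, hswap, hsum_n, hfull, htail_sum, hhead, hmT]
end

section
/- Let G = (V, E) be an Erdős–Rényi random graph on n vertices with edge probability λ/n, where λ > 0 is fixed, and let ζ > 1. Then the probability that there exists a nonempty subset A ⊂ V with |A| ≤ n/log n and |E(A)| > ζ|A| tends to 0 as n → ∞, where E(A) is the set of edges with both endpoints in A. More precisely, this probability is at most Σ_{k ≤ n/log n} C(n,k) · P[Bin(C(k,2), λ/n) > ζk]. -/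
open Finset
open scoped Classical

/-- Probability weight of an edge-configuration `ω` of the Erdős–Rényi graph `G(n, lam/n)`:
each unordered pair is present independently with probability `lam/n`. -/
noncomputable def erWeight (n : ℕ) (lam : ℝ) (ω : Sym2 (Fin n) → Bool) : ℝ :=
  ∏ e : Sym2 (Fin n), (if ω e then lam / n else 1 - lam / n)

/-- Number of edges of the configuration `ω` with both endpoints in `A`. -/
noncomputable def edgesIn (n : ℕ) (ω : Sym2 (Fin n) → Bool) (A : Finset (Fin n)) : ℕ :=
  (Finset.univ.filter fun e : Sym2 (Fin n) =>
    ¬e.IsDiag ∧ (∀ v ∈ e, v ∈ A) ∧ ω e = true).card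

/-- Probability that some nonempty `A` with `|A| ≤ n / log n` has `|E(A)| > ζ|A|`. -/
noncomputable def badProb (lam ζ : ℝ) (n : ℕ) : ℝ :=
  ∑ ω : Sym2 (Fin n) → Bool, erWeight n lam ω *
    (if ∃ A : Finset (Fin n), A.Nonempty ∧ (A.card : ℝ) ≤ (n : ℝ) / Real.log n ∧
        ζ * (A.card : ℝ) < (edgesIn n ω A : ℝ) then 1 else 0)

/-- The binomial tail `P[Bin(m, q) > t]`. -/
noncomputable def binomTailGT (m : ℕ) (q t : ℝ) : ℝ :=
  ∑ i ∈ Finset.range (m + 1),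
    if t < (i : ℝ) then (m.choose i : ℝ) * q ^ i * (1 - q) ^ (m - i) else 0

namespace DSU


noncomputable def w (q : ℝ) (b : Bool) : ℝ := if b then q else 1 - q

lemma sum_w (q : ℝ) : ∑ b : Bool, w q b = 1 := by simp [w]

lemma marginal {n : ℕ} (q : ℝ) (S : Finset (Sym2 (Fin n))) (F : ℕ → ℝ) :
    ∑ ω : Sym2 (Fin n) → Bool, (∏ e, w q (ω e)) * F ((S.filter fun e => ω e = true).card)
      = ∑ i ∈ range (S.card + 1),
          (S.card.choose i : ℝ) * (q ^ i * (1 - q) ^ (S.card - i) * F i) := by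
  classical
  have hmaps : ∀ ω : Sym2 (Fin n) → Bool, ω ∈ (univ : Finset _) →
      (S.filter fun e => ω e = true) ∈ S.powerset :=
    fun ω _ => mem_powerset.2 (filter_subset _ _)
  rw [← Finset.sum_fiberwise_of_maps_to hmaps
    (fun ω => (∏ e, w q (ω e)) * F ((S.filter fun e => ω e = true).card))]
  have key : ∀ T ∈ S.powerset,
      (∑ ω ∈ univ.filter
          (fun ω : Sym2 (Fin n) → Bool => (S.filter fun e => ω e = true) = T),
        (∏ e, w q (ω e)) * F ((S.filter fun e => ω e = true).card))
      = q ^ T.card * (1 - q) ^ (S.card - T.card) * F T.card := by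
    intro T hT
    rw [mem_powerset] at hT
    have h1 : ∀ ω ∈ univ.filter
        (fun ω : Sym2 (Fin n) → Bool => (S.filter fun e => ω e = true) = T),
        (∏ e, w q (ω e)) * F ((S.filter fun e => ω e = true).card)
          = (∏ e, w q (ω e)) * F T.card := by
      intro ω hω
      rw [mem_filter] at hω
      rw [hω.2]
    rw [Finset.sum_congr rfl h1, ← Finset.sum_mul]
    congr 1
    have hfiber : univ.filter
        (fun ω : Sym2 (Fin n) → Bool => (S.filter fun e => ω e = true) = T)
        = Fintype.piFinset (fun e =>
            if e ∈ S then ({(if e ∈ T then true else false)} : Finset Bool) else Finset.univ) := by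
      ext ω
      simp only [mem_filter, mem_univ, true_and, Fintype.mem_piFinset]
      constructor
      · intro h e
        by_cases heS : e ∈ S
        · have hiff : e ∈ T ↔ ω e = true := by
            rw [← h, mem_filter]; tauto
          simp only [heS, if_true, Finset.mem_singleton]
          by_cases heT : e ∈ T
          · simp [heT, hiff.mp heT]
          · simp only [heT, if_false]
            cases hωe : ω e
            · rfl
            · exact absurd (hiff.mpr hωe) heT
        · simp [heS]
      · intro h
        ext e
        rw [mem_filter]
        constructor
        · rintro ⟨heS, hωe⟩
          have := h e
          simp only [heS, if_true, Finset.mem_singleton] at this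
          by_cases heT : e ∈ T
          · exact heT
          · simp [heT] at this; rw [this] at hωe; exact absurd hωe (by simp)
        · intro heT
          have heS : e ∈ S := hT heT
          have := h e
          simp only [heS, if_true, Finset.mem_singleton] at this
          refine ⟨heS, ?_⟩
          rw [this]; simp [heT]
    rw [hfiber, ← Finset.prod_univ_sum]
    have hfac : ∀ e : Sym2 (Fin n),
        (∑ b ∈ (if e ∈ S then ({(if e ∈ T then true else false)} : Finset Bool)
            else Finset.univ), w q b)
        = if e ∈ S then (if e ∈ T then q else 1 - q) else 1 := by
      intro e
      by_cases heS : e ∈ S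
      · by_cases heT : e ∈ T <;> simp [heS, heT, w]
      · simp [heS, w]
    rw [Finset.prod_congr rfl (fun e _ => hfac e)]
    rw [Finset.prod_ite_mem Finset.univ S (fun e => if e ∈ T then q else 1 - q),
      Finset.univ_inter]
    rw [Finset.prod_ite, Finset.prod_const, Finset.prod_const]
    have h2 : S.filter (· ∈ T) = T := by
      rw [Finset.filter_mem_eq_inter]; exact Finset.inter_eq_right.2 hT
    have h3 : S.filter (· ∉ T) = S \ T := (Finset.sdiff_eq_filter S T).symm
    rw [h2, h3, Finset.card_sdiff_of_subset hT]
  rw [Finset.sum_congr rfl key]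
  rw [show (fun T : Finset (Sym2 (Fin n)) => q ^ T.card * (1 - q) ^ (S.card - T.card) * F T.card)
      = (fun T => (fun i => q ^ i * (1 - q) ^ (S.card - i) * F i) T.card) from rfl]
  rw [Finset.sum_powerset_apply_card (fun i => q ^ i * (1 - q) ^ (S.card - i) * F i)]
  exact Finset.sum_congr rfl (fun i _ => by rw [nsmul_eq_mul])





lemma card_S {n : ℕ} (A : Finset (Fin n)) :
    (univ.filter fun e : Sym2 (Fin n) => ¬e.IsDiag ∧ ∀ v ∈ e, v ∈ A).card
      = A.card.choose 2 := by
  classical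
  have h1 : (univ.filter fun e : Sym2 (Fin n) => ¬e.IsDiag ∧ ∀ v ∈ e, v ∈ A)
      = A.sym2.filter fun e => ¬e.IsDiag := by
    ext e
    simp only [mem_filter, mem_univ, true_and, Finset.mem_sym2_iff]
    tauto
  have h2 : A.sym2.filter (fun e => e.IsDiag) = A.image Sym2.diag := by
    ext e
    simp only [mem_filter, mem_image, Finset.mem_sym2_iff]
    constructor
    · rintro ⟨hmem, hdiag⟩
      obtain ⟨a, rfl⟩ : ∃ a, Sym2.diag a = e := ⟨e.diagElem hdiag, Sym2.diag_diagElem hdiag⟩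
      exact ⟨a, hmem a (by rw [Sym2.diag]; simp), rfl⟩
    · rintro ⟨a, ha, rfl⟩
      refine ⟨?_, Sym2.diag_isDiag a⟩
      intro y hy
      rw [Sym2.diag] at hy
      simp only [Sym2.mem_iff] at hy
      rcases hy with rfl | rfl <;> exact ha
  have h3 := Finset.card_filter_add_card_filter_not
    (s := A.sym2) (p := fun e => e.IsDiag)
  have h4 : (A.sym2.filter (fun e => e.IsDiag)).card = A.card := by
    rw [h2, Finset.card_image_of_injective _ Sym2.diag_injective]
  have h5 : A.sym2.card = (A.card + 1).choose 2 := Finset.card_sym2 A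
  have h6 : (A.card + 1).choose 2 = A.card.choose 1 + A.card.choose 2 :=
    Nat.choose_succ_succ A.card 1
  rw [h1]
  have h7 : (A.sym2.filter fun e => ¬e.IsDiag).card
      = A.sym2.card - (A.sym2.filter (fun e => e.IsDiag)).card := by omega
  rw [h7, h4, h5, h6, Nat.choose_one_right]
  omega

lemma probEvent {n : ℕ} (lam : ℝ) (A : Finset (Fin n)) (t : ℝ) :
    ∑ ω : Sym2 (Fin n) → Bool, erWeight n lam ω * (if t < (edgesIn n ω A : ℝ) then 1 else 0)
      = binomTailGT (A.card.choose 2) (lam / n) t := by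
  classical
  set S : Finset (Sym2 (Fin n)) :=
    univ.filter (fun e : Sym2 (Fin n) => ¬e.IsDiag ∧ ∀ v ∈ e, v ∈ A) with hS
  have hedge : ∀ ω : Sym2 (Fin n) → Bool,
      edgesIn n ω A = ((S.filter fun e => ω e = true)).card := by
    intro ω
    unfold edgesIn
    rw [hS, Finset.filter_filter]
    congr 1
    apply Finset.filter_congr
    intro e _
    tauto
  have hw : ∀ ω : Sym2 (Fin n) → Bool, erWeight n lam ω = ∏ e, w (lam / n) (ω e) := by
    intro ω; rfl
  calc ∑ ω : Sym2 (Fin n) → Bool, erWeight n lam ω *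
        (if t < (edgesIn n ω A : ℝ) then 1 else 0)
      = ∑ ω : Sym2 (Fin n) → Bool, (∏ e, w (lam / n) (ω e)) *
          (fun i : ℕ => if t < (i : ℝ) then (1:ℝ) else 0) ((S.filter fun e => ω e = true)).card := by
        apply Finset.sum_congr rfl
        intro ω _
        rw [hw ω, hedge ω]
    _ = ∑ i ∈ range (S.card + 1),
          (S.card.choose i : ℝ) * ((lam/n) ^ i * (1 - lam/n) ^ (S.card - i) *
            (fun i : ℕ => if t < (i : ℝ) then (1:ℝ) else 0) i) := marginal (lam / n) S (fun i : ℕ => if t < (i : ℝ) then (1:ℝ) else 0)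
    _ = binomTailGT (A.card.choose 2) (lam / n) t := by
        have hcard : S.card = A.card.choose 2 := card_S A
        unfold binomTailGT
        rw [hcard] at *
        apply Finset.sum_congr rfl
        intro i _
        by_cases h : t < (i:ℝ) <;> simp [h] <;> ring



lemma erWeight_nonneg {n : ℕ} {lam : ℝ} (h0 : 0 ≤ lam / n) (h1 : lam / n ≤ 1)
    (ω : Sym2 (Fin n) → Bool) : 0 ≤ erWeight n lam ω := by
  apply Finset.prod_nonneg
  intro e _
  by_cases h : ω e <;> simp [h] <;> linarith

noncomputable def cfun (lam ζ : ℝ) (n k : ℕ) : ℝ :=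
  if k ≠ 0 ∧ (k : ℝ) ≤ (n : ℝ) / Real.log n then
    binomTailGT (k.choose 2) (lam / n) (ζ * k) else 0

lemma part2 (lam ζ : ℝ) (hlam : 0 < lam) (n : ℕ) (hn : lam ≤ (n : ℝ)) :
    badProb lam ζ n ≤
      ∑ k ∈ Finset.Icc 1 n,
        if (k : ℝ) ≤ (n : ℝ) / Real.log n then
          (n.choose k : ℝ) * binomTailGT (k.choose 2) (lam / n) (ζ * k)
        else 0 := by
  classical
  have hn0 : (0:ℝ) < n := lt_of_lt_of_le hlam hn
  have hq0 : 0 ≤ lam / n := le_of_lt (div_pos hlam hn0)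
  have hq1 : lam / n ≤ 1 := by rw [div_le_one hn0]; exact hn
  have hw0 := erWeight_nonneg (n := n) (lam := lam) hq0 hq1
  set 𝒜 : Finset (Finset (Fin n)) :=
    univ.filter (fun A => A.Nonempty ∧ (A.card : ℝ) ≤ (n : ℝ) / Real.log n) with h𝒜
  have hpoint : ∀ ω : Sym2 (Fin n) → Bool,
      (if ∃ A : Finset (Fin n), A.Nonempty ∧ (A.card : ℝ) ≤ (n : ℝ) / Real.log n ∧
          ζ * (A.card : ℝ) < (edgesIn n ω A : ℝ) then (1:ℝ) else 0)
      ≤ ∑ A ∈ 𝒜, (if ζ * (A.card : ℝ) < (edgesIn n ω A : ℝ) then (1:ℝ) else 0) := by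
    intro ω
    have hterm : ∀ B ∈ 𝒜, (0:ℝ) ≤ if ζ * (B.card : ℝ) < (edgesIn n ω B : ℝ) then (1:ℝ) else 0 :=
      fun B _ => by split_ifs <;> norm_num
    split_ifs with h
    · obtain ⟨A, h1, h2, h3⟩ := h
      have hA : A ∈ 𝒜 := by rw [h𝒜, mem_filter]; exact ⟨mem_univ _, h1, h2⟩
      calc (1:ℝ) = if ζ * (A.card : ℝ) < (edgesIn n ω A : ℝ) then (1:ℝ) else 0 := (if_pos h3).symm
        _ ≤ _ := Finset.single_le_sum hterm hA
    · exact Finset.sum_nonneg hterm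
  calc badProb lam ζ n
      ≤ ∑ ω : Sym2 (Fin n) → Bool, erWeight n lam ω *
          ∑ A ∈ 𝒜, (if ζ * (A.card : ℝ) < (edgesIn n ω A : ℝ) then (1:ℝ) else 0) := by
        apply Finset.sum_le_sum
        intro ω _
        exact mul_le_mul_of_nonneg_left (hpoint ω) (hw0 ω)
    _ = ∑ ω : Sym2 (Fin n) → Bool, ∑ A ∈ 𝒜, erWeight n lam ω *
          (if ζ * (A.card : ℝ) < (edgesIn n ω A : ℝ) then (1:ℝ) else 0) := by
        apply Finset.sum_congr rfl
        intro ω _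
        rw [Finset.mul_sum]
    _ = ∑ A ∈ 𝒜, ∑ ω : Sym2 (Fin n) → Bool, erWeight n lam ω *
          (if ζ * (A.card : ℝ) < (edgesIn n ω A : ℝ) then (1:ℝ) else 0) := Finset.sum_comm
    _ = ∑ A ∈ 𝒜, binomTailGT (A.card.choose 2) (lam / n) (ζ * A.card) :=
        Finset.sum_congr rfl (fun A _ => probEvent lam A (ζ * A.card))
    _ = ∑ A ∈ (univ : Finset (Finset (Fin n))), cfun lam ζ n A.card := by
        rw [h𝒜, Finset.sum_filter]
        apply Finset.sum_congr rfl
        intro A _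
        unfold cfun
        by_cases h1 : A.Nonempty ∧ (A.card : ℝ) ≤ (n : ℝ) / Real.log n
        · rw [if_pos h1, if_pos ⟨Finset.card_ne_zero.2 h1.1, h1.2⟩]
        · rw [if_neg h1, if_neg]
          rintro ⟨hc, hle⟩
          exact h1 ⟨Finset.card_ne_zero.1 hc, hle⟩
    _ = ∑ k ∈ range (n + 1), (n.choose k) • cfun lam ζ n k := by
        rw [← Finset.powerset_univ, Finset.sum_powerset_apply_card, Finset.card_univ,
          Fintype.card_fin]
    _ = ∑ k ∈ Finset.Icc 1 n, (n.choose k) • cfun lam ζ n k := by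
        refine (Finset.sum_subset ?_ ?_).symm
        · intro k hk; rw [Finset.mem_Icc] at hk; rw [Finset.mem_range]; omega
        · intro k hkr hk
          have hk0 : k = 0 := by
            rw [Finset.mem_range] at hkr
            have : ¬(1 ≤ k ∧ k ≤ n) := fun h => hk (Finset.mem_Icc.2 h)
            omega
          subst hk0
          simp [cfun]
    _ = ∑ k ∈ Finset.Icc 1 n,
          (if (k : ℝ) ≤ (n : ℝ) / Real.log n then
            (n.choose k : ℝ) * binomTailGT (k.choose 2) (lam / n) (ζ * k) else 0) := by
        apply Finset.sum_congr rfl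
        intro k hk
        rw [Finset.mem_Icc] at hk
        have hk0 : k ≠ 0 := by omega
        rw [nsmul_eq_mul]
        unfold cfun
        simp only [hk0, ne_eq, not_false_iff, true_and]
        by_cases h : (k:ℝ) ≤ (n:ℝ) / Real.log n
        · rw [if_pos h, if_pos h]
        · rw [if_neg h, if_neg h, mul_zero]



lemma pow_le_three_pow_mul_factorial (s : ℕ) :
    (s : ℝ) ^ s ≤ 3 ^ s * (s.factorial : ℝ) := by
  have hf : (0:ℝ) < (s.factorial : ℝ) := by exact_mod_cast s.factorial_pos
  have h1 : (s:ℝ) ^ s / (s.factorial : ℝ) ≤ Real.exp s := by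
    calc (s:ℝ) ^ s / (s.factorial : ℝ)
        ≤ ∑ i ∈ range (s+1), (s:ℝ) ^ i / (i.factorial : ℝ) := by
          exact Finset.single_le_sum (f := fun i => (s:ℝ) ^ i / (i.factorial : ℝ))
            (fun i _ => by positivity) (self_mem_range_succ s)
      _ ≤ Real.exp s := Real.sum_le_exp_of_nonneg (by positivity) _
  have h2 : Real.exp s ≤ 3 ^ s := by
    have he : Real.exp (s:ℝ) = Real.exp 1 ^ s := by
      rw [← Real.exp_nat_mul]; norm_num
    rw [he]
    apply pow_le_pow_left₀ (Real.exp_pos 1).le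
    exact le_of_lt (lt_of_lt_of_le Real.exp_one_lt_d9 (by norm_num))
  calc (s:ℝ) ^ s = ((s:ℝ) ^ s / (s.factorial : ℝ)) * (s.factorial : ℝ) := by
        field_simp
    _ ≤ 3 ^ s * (s.factorial : ℝ) :=
        mul_le_mul_of_nonneg_right (h1.trans h2) hf.le

lemma choose_le_aux (m s : ℕ) (hs : 0 < s) :
    (m.choose s : ℝ) ≤ (3 * m / s) ^ s := by
  have h1 : (m.choose s : ℝ) * (s.factorial : ℝ) ≤ (m:ℝ) ^ s := by
    have h2 : m.choose s * s.factorial ≤ m ^ s := by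
      calc m.choose s * s.factorial = s.factorial * m.choose s := Nat.mul_comm _ _
        _ = m.descFactorial s := (m.descFactorial_eq_factorial_mul_choose s).symm
        _ ≤ m ^ s := Nat.descFactorial_le_pow m s
    exact_mod_cast h2
  have hs' : (0:ℝ) < (s:ℝ) ^ s := by positivity
  rw [div_pow, le_div_iff₀ hs']
  calc (m.choose s : ℝ) * (s:ℝ) ^ s
      ≤ (m.choose s : ℝ) * (3 ^ s * (s.factorial : ℝ)) :=
        mul_le_mul_of_nonneg_left (pow_le_three_pow_mul_factorial s) (by positivity)
    _ = (m.choose s : ℝ) * (s.factorial : ℝ) * 3 ^ s := by ring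
    _ ≤ (m:ℝ) ^ s * 3 ^ s := mul_le_mul_of_nonneg_right h1 (by positivity)
    _ = (3 * (m:ℝ)) ^ s := by rw [mul_pow]; ring

lemma binomTail_le (m : ℕ) (q t : ℝ) (hq0 : 0 ≤ q) (hq1 : q ≤ 1) (ht : 0 ≤ t) :
    binomTailGT m q t ≤ (m.choose (⌊t⌋₊ + 1) : ℝ) * q ^ (⌊t⌋₊ + 1) := by
  set s := ⌊t⌋₊ + 1 with hs
  have h1q : (0:ℝ) ≤ 1 - q := by linarith
  have hiff : ∀ i : ℕ, (t < (i:ℝ)) ↔ s ≤ i := by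
    intro i
    constructor
    · intro h; exact Nat.succ_le_of_lt ((Nat.floor_lt ht).2 h)
    · intro h; exact (Nat.floor_lt ht).1 (Nat.lt_of_succ_le h)
  have hrw : binomTailGT m q t
      = ∑ i ∈ Finset.Ico s (m+1), (m.choose i : ℝ) * q ^ i * (1 - q) ^ (m - i) := by
    unfold binomTailGT
    rw [Finset.sum_congr rfl (fun i _ => if_congr (hiff i) rfl rfl), ← Finset.sum_filter]
    congr 1
    ext i
    simp only [Finset.mem_filter, Finset.mem_range, Finset.mem_Ico]
    omega
  rw [hrw]
  by_cases hsm : s ≤ m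
  · calc ∑ i ∈ Finset.Ico s (m+1), (m.choose i : ℝ) * q ^ i * (1 - q) ^ (m - i)
        ≤ ∑ i ∈ Finset.Ico s (m+1), (m.choose s : ℝ) * q ^ s *
            (((m-s).choose (i-s) : ℝ) * q ^ (i-s) * (1 - q) ^ ((m-s) - (i-s))) := by
          apply Finset.sum_le_sum
          intro i hi
          rw [Finset.mem_Ico] at hi
          have hsi : s ≤ i := hi.1
          have him : i ≤ m := by omega
          have hchoose : (m.choose i : ℝ) ≤ (m.choose s : ℝ) * ((m-s).choose (i-s) : ℝ) := by
            have hid := Nat.choose_mul (n := m) hsi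
            have hpos : 1 ≤ i.choose s := Nat.succ_le_of_lt (Nat.choose_pos hsi)
            have : m.choose i ≤ m.choose s * (m-s).choose (i-s) := by
              calc m.choose i ≤ m.choose i * i.choose s :=
                    Nat.le_mul_of_pos_right _ (Nat.choose_pos hsi)
                _ = m.choose s * (m-s).choose (i-s) := hid
            exact_mod_cast this
          have hq' : q ^ i = q ^ s * q ^ (i-s) := by rw [← pow_add]; congr 1; omega
          have hE : m - i = (m-s) - (i-s) := by omega
          rw [hq', hE]
          have h0 : (0:ℝ) ≤ q ^ s * q ^ (i-s) * (1-q) ^ ((m-s)-(i-s)) := by positivity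
          calc (m.choose i : ℝ) * (q ^ s * q ^ (i-s)) * (1 - q) ^ ((m-s) - (i-s))
              = (m.choose i : ℝ) * (q ^ s * q ^ (i-s) * (1-q) ^ ((m-s)-(i-s))) := by ring
            _ ≤ ((m.choose s : ℝ) * ((m-s).choose (i-s) : ℝ)) *
                  (q ^ s * q ^ (i-s) * (1-q) ^ ((m-s)-(i-s))) :=
                mul_le_mul_of_nonneg_right hchoose h0
            _ = (m.choose s : ℝ) * q ^ s *
                  (((m-s).choose (i-s) : ℝ) * q ^ (i-s) * (1 - q) ^ ((m-s) - (i-s))) := by ring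
      _ = (m.choose s : ℝ) * q ^ s * ∑ i ∈ Finset.Ico s (m+1),
            (((m-s).choose (i-s) : ℝ) * q ^ (i-s) * (1 - q) ^ ((m-s) - (i-s))) := by
          rw [Finset.mul_sum]
      _ ≤ (m.choose s : ℝ) * q ^ s * 1 := by
          apply mul_le_mul_of_nonneg_left _ (by positivity)
          have hre : ∑ i ∈ Finset.Ico s (m+1),
              (((m-s).choose (i-s) : ℝ) * q ^ (i-s) * (1 - q) ^ ((m-s) - (i-s)))
              = ∑ j ∈ range (m-s+1), (((m-s).choose j : ℝ) * q ^ j * (1 - q) ^ ((m-s) - j)) := by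
            rw [Finset.sum_Ico_eq_sum_range]
            have : m + 1 - s = m - s + 1 := by omega
            rw [this]
            apply Finset.sum_congr rfl
            intro j _
            have hj : s + j - s = j := by omega
            rw [hj]
          rw [hre]
          have hb : ∑ j ∈ range (m-s+1), (((m-s).choose j : ℝ) * q ^ j * (1 - q) ^ ((m-s) - j))
              = (q + (1-q)) ^ (m-s) := by
            rw [add_pow]
            apply Finset.sum_congr rfl
            intro j _
            ring
          rw [hb]
          norm_num
      _ = (m.choose s : ℝ) * q ^ s := mul_one _
  · have : Finset.Ico s (m+1) = ∅ := by
      apply Finset.Ico_eq_empty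
      omega
    rw [this, Finset.sum_empty]
    positivity



lemma binomTail_nonneg (m : ℕ) (q t : ℝ) (hq0 : 0 ≤ q) (hq1 : q ≤ 1) :
    0 ≤ binomTailGT m q t := by
  apply Finset.sum_nonneg
  intro i _
  split_ifs
  · have h1 : (0:ℝ) ≤ 1 - q := by linarith
    positivity
  · exact le_rfl

lemma perk (lam ζ : ℝ) (hlam : 0 < lam) (hζ : 1 < ζ) (n k : ℕ) (hn1 : lam ≤ (n:ℝ))
    (hL1 : 1 ≤ Real.log n) (hL3 : 3 * lam / (2 * ζ) ≤ Real.log n)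
    (hk1 : 1 ≤ k) (hkn : (k:ℝ) ≤ (n:ℝ) / Real.log n) :
    (n.choose k : ℝ) * binomTailGT (k.choose 2) (lam / n) (ζ * k)
      ≤ (3 * (3 * lam / (2 * ζ)) ^ ζ * ((Real.log n) ^ (ζ - 1))⁻¹) ^ k := by
  have hζ0 : (0:ℝ) < ζ := by linarith
  have hn0 : (0:ℝ) < n := lt_of_lt_of_le hlam hn1
  have hL0 : (0:ℝ) < Real.log n := lt_of_lt_of_le one_pos hL1
  have hk0 : (0:ℝ) < k := by exact_mod_cast hk1
  set q : ℝ := lam / n with hqdef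
  have hq0 : 0 ≤ q := le_of_lt (div_pos hlam hn0)
  have hq1 : q ≤ 1 := by rw [hqdef, div_le_one hn0]; exact hn1
  set t : ℝ := ζ * k with htdef
  have ht0 : 0 ≤ t := by positivity
  set s : ℕ := ⌊t⌋₊ + 1 with hsdef
  have hts : t < (s:ℝ) := by
    rw [hsdef]; push_cast; exact Nat.lt_floor_add_one t
  have hst : ζ * (k:ℝ) ≤ (s:ℝ) := le_of_lt hts
  have hs0 : 0 < s := Nat.succ_pos _
  set m : ℕ := k.choose 2 with hmdef
  have hm : (m:ℝ) ≤ (k:ℝ) * k / 2 := by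
    have h2 : 2 * m ≤ k * k := by
      rw [hmdef, Nat.choose_two_right]
      have h3 : 2 * (k * (k-1) / 2) ≤ k * (k-1) := by omega
      have h4 : k * (k-1) ≤ k * k := Nat.mul_le_mul_left k (Nat.sub_le k 1)
      omega
    have h5 : ((2 * m : ℕ) : ℝ) ≤ ((k * k : ℕ) : ℝ) := by exact_mod_cast h2
    push_cast at h5
    linarith
  have hkn1 : (k:ℝ)/n ≤ 1 / Real.log n := by
    rw [div_le_div_iff₀ hn0 hL0]
    rw [le_div_iff₀ hL0] at hkn
    linarith
  set b : ℝ := (3 * lam / (2 * ζ)) * ((k:ℝ) / n) with hbdef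
  have hb0 : 0 < b := by positivity
  have hb1 : b ≤ 1 := by
    calc b ≤ (3 * lam / (2*ζ)) * (1 / Real.log n) :=
          mul_le_mul_of_nonneg_left hkn1 (by positivity)
      _ ≤ Real.log n * (1 / Real.log n) :=
          mul_le_mul_of_nonneg_right hL3 (by positivity)
      _ = 1 := by field_simp
  have hmq : 3 * (m:ℝ) * q / s ≤ b := by
    rw [div_le_iff₀ (by positivity : (0:ℝ) < (s:ℝ))]
    calc 3 * (m:ℝ) * q ≤ 3 * ((k:ℝ) * k / 2) * q := by
          apply mul_le_mul_of_nonneg_right _ hq0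
          linarith
      _ = b * (ζ * k) := by
          rw [hbdef, hqdef]
          field_simp
      _ ≤ b * s := mul_le_mul_of_nonneg_left hst hb0.le
  have hbt : binomTailGT m q t ≤ b ^ s := by
    calc binomTailGT m q t ≤ (m.choose s : ℝ) * q ^ s := binomTail_le m q t hq0 hq1 ht0
      _ ≤ (3 * m / s) ^ s * q ^ s :=
          mul_le_mul_of_nonneg_right (choose_le_aux m s hs0) (by positivity)
      _ = (3 * (m:ℝ) * q / s) ^ s := by rw [← mul_pow]; congr 1; ring
      _ ≤ b ^ s := pow_le_pow_left₀ (by positivity) hmq s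
  have hbs : b ^ s ≤ (b ^ ζ) ^ k := by
    calc b ^ s = b ^ ((s:ℕ):ℝ) := (Real.rpow_natCast b s).symm
      _ ≤ b ^ (ζ * (k:ℝ)) := Real.rpow_le_rpow_of_exponent_ge hb0 hb1 hst
      _ = (b ^ ζ) ^ k := by rw [Real.rpow_mul hb0.le, Real.rpow_natCast]
  have hbr : (3 * (n:ℝ) / k) * b ^ ζ
      ≤ 3 * (3 * lam / (2 * ζ)) ^ ζ * ((Real.log n) ^ (ζ - 1))⁻¹ := by
    have hbζ : b ^ ζ = (3 * lam / (2*ζ)) ^ ζ * ((k:ℝ)/n) ^ ζ :=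
      Real.mul_rpow (by positivity) (by positivity)
    have hkn' : ((k:ℝ)/n) ^ ζ = ((k:ℝ)/n) ^ (ζ-1) * ((k:ℝ)/n) := by
      have h := Real.rpow_add (show (0:ℝ) < (k:ℝ)/n by positivity) (ζ-1) 1
      rw [Real.rpow_one] at h
      rw [← h]
      norm_num
    have hnk1 : ((n:ℝ)/k) * ((k:ℝ)/n) = 1 := by field_simp
    calc (3 * (n:ℝ) / k) * b ^ ζ
        = 3 * (3 * lam / (2*ζ)) ^ ζ * (((k:ℝ)/n) ^ (ζ-1) * (((n:ℝ)/k) * ((k:ℝ)/n))) := by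
          rw [hbζ, hkn']; ring
      _ = 3 * (3 * lam / (2*ζ)) ^ ζ * ((k:ℝ)/n) ^ (ζ-1) := by rw [hnk1, mul_one]
      _ ≤ 3 * (3 * lam / (2 * ζ)) ^ ζ * ((Real.log n) ^ (ζ - 1))⁻¹ := by
          apply mul_le_mul_of_nonneg_left _ (by positivity)
          have h2 : ((k:ℝ)/n) ^ (ζ-1) ≤ (1 / Real.log n) ^ (ζ-1) :=
            Real.rpow_le_rpow (by positivity) hkn1 (by linarith)
          rwa [one_div, Real.inv_rpow hL0.le] at h2
  calc (n.choose k : ℝ) * binomTailGT m q t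
      ≤ (3 * (n:ℝ) / k) ^ k * (b ^ s) :=
        mul_le_mul (choose_le_aux n k hk1) hbt (binomTail_nonneg m q t hq0 hq1) (by positivity)
    _ ≤ (3 * (n:ℝ) / k) ^ k * (b ^ ζ) ^ k :=
        mul_le_mul_of_nonneg_left hbs (by positivity)
    _ = ((3 * (n:ℝ) / k) * b ^ ζ) ^ k := (mul_pow _ _ _).symm
    _ ≤ (3 * (3 * lam / (2 * ζ)) ^ ζ * ((Real.log n) ^ (ζ - 1))⁻¹) ^ k := by
        apply pow_le_pow_left₀ (by positivity) hbr

lemma geom_bound (r : ℝ) (hr0 : 0 ≤ r) (hr : r ≤ 1/2) (n : ℕ) :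
    ∑ k ∈ Finset.Icc 1 n, r ^ k ≤ 2 * r := by
  rw [← Finset.Ico_add_one_right_eq_Icc, Finset.sum_Ico_eq_sum_range]
  calc ∑ i ∈ range n, r ^ (1+i) = ∑ i ∈ range n, r * r ^ i := by
        apply Finset.sum_congr rfl
        intro i _
        rw [pow_add, pow_one]
    _ = r * ∑ i ∈ range n, r ^ i := (Finset.mul_sum _ _ _).symm
    _ ≤ r * ∑ i ∈ range n, (1/2:ℝ) ^ i := by
        apply mul_le_mul_of_nonneg_left _ hr0
        apply Finset.sum_le_sum
        intro i _
        exact pow_le_pow_left₀ hr0 hr i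
    _ ≤ r * 2 := mul_le_mul_of_nonneg_left (sum_geometric_two_le n) hr0
    _ = 2 * r := mul_comm r 2


lemma badProb_nonneg (lam ζ : ℝ) (hlam : 0 < lam) (n : ℕ) (hn : lam ≤ (n : ℝ)) :
    0 ≤ badProb lam ζ n := by
  have hn0 : (0:ℝ) < n := lt_of_lt_of_le hlam hn
  have hq0 : 0 ≤ lam / n := le_of_lt (div_pos hlam hn0)
  have hq1 : lam / n ≤ 1 := by rw [div_le_one hn0]; exact hn
  apply Finset.sum_nonneg
  intro ω _
  apply mul_nonneg (erWeight_nonneg hq0 hq1 ω)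
  split_ifs <;> norm_num

end DSU

/-- For `G(n, lam/n)` with `lam > 0` fixed and `ζ > 1`, the probability that some nonempty
`A` with `|A| ≤ n/log n` satisfies `|E(A)| > ζ|A|` tends to `0`; more precisely it is at most
`Σ_{k ≤ n/log n} C(n,k)·P[Bin(C(k,2), lam/n) > ζk]`. -/

theorem dense_small_subgraph_unlikely (lam ζ : ℝ) (hlam : 0 < lam) (hζ : 1 < ζ) :
    Filter.Tendsto (fun n => badProb lam ζ n) Filter.atTop (nhds 0) ∧
    ∀ n : ℕ, lam ≤ (n : ℝ) →
      badProb lam ζ n ≤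
        ∑ k ∈ Finset.Icc 1 n,
          if (k : ℝ) ≤ (n : ℝ) / Real.log n then
            (n.choose k : ℝ) * binomTailGT (k.choose 2) (lam / n) (ζ * k)
          else 0 := by
  refine ⟨?_, DSU.part2 lam ζ hlam⟩
  have hζ1 : (0:ℝ) < ζ - 1 := by linarith
  have hζ0 : (0:ℝ) < ζ := by linarith
  have hc0 : (0:ℝ) < 3 * (3 * lam / (2 * ζ)) ^ ζ := by positivity
  have hlog : Filter.Tendsto (fun n : ℕ => Real.log n) Filter.atTop Filter.atTop :=
    Real.tendsto_log_atTop.comp tendsto_natCast_atTop_atTop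
  have hpow : Filter.Tendsto (fun n : ℕ => (Real.log n) ^ (ζ-1)) Filter.atTop Filter.atTop :=
    (tendsto_rpow_atTop hζ1).comp hlog
  have hinv : Filter.Tendsto (fun n : ℕ => ((Real.log n) ^ (ζ-1))⁻¹) Filter.atTop (nhds 0) :=
    hpow.inv_tendsto_atTop
  have hr0 : Filter.Tendsto
      (fun n : ℕ => 3 * (3 * lam / (2 * ζ)) ^ ζ * ((Real.log n) ^ (ζ-1))⁻¹)
      Filter.atTop (nhds 0) := by
    have := hinv.const_mul (3 * (3 * lam / (2 * ζ)) ^ ζ)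
    simpa using this
  have hg : Filter.Tendsto
      (fun n : ℕ => 2 * (3 * (3 * lam / (2 * ζ)) ^ ζ * ((Real.log n) ^ (ζ-1))⁻¹))
      Filter.atTop (nhds 0) := by
    have := hr0.const_mul (2:ℝ)
    simpa using this
  apply squeeze_zero' ?_ ?_ hg
  · obtain ⟨N, hN⟩ := exists_nat_ge lam
    filter_upwards [Filter.eventually_ge_atTop N] with n hn
    exact DSU.badProb_nonneg lam ζ hlam n (hN.trans (by exact_mod_cast hn))
  · obtain ⟨N, hN⟩ := exists_nat_ge lam
    have h1 : ∀ᶠ n : ℕ in Filter.atTop, lam ≤ (n:ℝ) := by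
      filter_upwards [Filter.eventually_ge_atTop N] with n hn
      exact hN.trans (by exact_mod_cast hn)
    have h2 : ∀ᶠ n : ℕ in Filter.atTop, 1 ≤ Real.log n := hlog.eventually_ge_atTop 1
    have h3 : ∀ᶠ n : ℕ in Filter.atTop, 3 * lam / (2 * ζ) ≤ Real.log n :=
      hlog.eventually_ge_atTop _
    have h4 : ∀ᶠ n : ℕ in Filter.atTop,
        3 * (3 * lam / (2 * ζ)) ^ ζ * ((Real.log n) ^ (ζ-1))⁻¹ ≤ 1/2 :=
      hr0.eventually (eventually_le_nhds (by norm_num))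
    filter_upwards [h1, h2, h3, h4] with n hn1 hn2 hn3 hn4
    have hL0 : (0:ℝ) < Real.log n := lt_of_lt_of_le one_pos hn2
    have hrn0 : 0 ≤ 3 * (3 * lam / (2 * ζ)) ^ ζ * ((Real.log n) ^ (ζ-1))⁻¹ := by
      apply mul_nonneg hc0.le
      exact inv_nonneg.2 (Real.rpow_nonneg hL0.le _)
    calc badProb lam ζ n
        ≤ ∑ k ∈ Finset.Icc 1 n,
            (if (k : ℝ) ≤ (n : ℝ) / Real.log n then
              (n.choose k : ℝ) * binomTailGT (k.choose 2) (lam / n) (ζ * k)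
            else 0) := DSU.part2 lam ζ hlam n hn1
      _ ≤ ∑ k ∈ Finset.Icc 1 n,
            (3 * (3 * lam / (2 * ζ)) ^ ζ * ((Real.log n) ^ (ζ-1))⁻¹) ^ k := by
          apply Finset.sum_le_sum
          intro k hk
          rw [Finset.mem_Icc] at hk
          split_ifs with h
          · exact DSU.perk lam ζ hlam hζ n k hn1 hn2 hn3 hk.1 h
          · positivity
      _ ≤ 2 * (3 * (3 * lam / (2 * ζ)) ^ ζ * ((Real.log n) ^ (ζ-1))⁻¹) :=
          DSU.geom_bound _ hrn0 hn4 n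
end
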